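/- arXiv:0902.0174 — 5 statements merged into one kernel-verified Lean document; each statement's English description precedes it below -/
import Mathlib

section
/- Fix an integer r ≥ 1, a finite set A, and a positive integer n. Let W be a weight such that nW(a,b;i) ∈ ℤ for every a,b ∈ A and every i ∈ {1,…,r}. Then (1/(n!)^r) Σ_{σ∈Sym(n)^r} |{ψ : {1,…,n} → A : d_*(W, W_{σ,ψ}) = 0}| = (n!)^{1−r} · (Π_{a∈A} (nW(a))!)^{2r−1} / (Π_{i=1}^r Π_{a,b∈A} (nW(a,b;i))!). -/
open MeasureTheory Real Filter

section CountingAux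

theorem Equiv.Perm.apply_inv_self {α : Type*} (f : Equiv.Perm α) (x : α) : f (f⁻¹ x) = x := by
  simp only [Equiv.Perm.coe_inv, Equiv.apply_symm_apply]

theorem Equiv.Perm.inv_apply_self {α : Type*} (f : Equiv.Perm α) (x : α) : f⁻¹ (f x) = x := by
  simp only [Equiv.Perm.coe_inv, Equiv.symm_apply_apply]

variable {α ι κ : Type*}

/-- Functions with equal fiber cardinalities differ by a permutation. -/
lemma exists_perm_comp [Fintype α] (f g : α → ι)
    (h : ∀ i, Nat.card {a // f a = i} = Nat.card {a // g a = i}) :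
    ∃ τ : Equiv.Perm α, f ∘ τ = g := by
  classical
  have e : ∀ i, {a // g a = i} ≃ {a // f a = i} := fun i =>
    Fintype.equivOfCardEq (by
      rw [← Nat.card_eq_fintype_card, ← Nat.card_eq_fintype_card]
      exact (h i).symm)
  refine ⟨(Equiv.sigmaFiberEquiv g).symm.trans ((Equiv.sigmaCongrRight e).trans
    (Equiv.sigmaFiberEquiv f)), ?_⟩
  funext a
  exact (e (g a) ⟨a, rfl⟩).2

/-- There exists a function with prescribed fiber cardinalities. -/
lemma exists_fun_fib [Fintype α] [Fintype ι] (m : ι → ℕ)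
    (h : ∑ i, m i = Fintype.card α) :
    ∃ f : α → ι, ∀ i, Nat.card {a // f a = i} = m i := by
  classical
  have hcard : Fintype.card α = Fintype.card (Σ i, Fin (m i)) := by
    simp [Fintype.card_sigma, h]
  obtain ⟨e⟩ : Nonempty (α ≃ Σ i, Fin (m i)) := ⟨Fintype.equivOfCardEq hcard⟩
  refine ⟨fun a => (e a).1, fun i => ?_⟩
  rw [Nat.card_congr (e.subtypeEquiv (fun a => Iff.rfl) :
    {a // (e a).1 = i} ≃ {p : Σ j, Fin (m j) // p.1 = i})]
  have e2 : Fin (m i) ≃ {p : Σ j, Fin (m j) // p.1 = i} := by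
    refine Equiv.ofBijective (fun x => ⟨⟨i, x⟩, rfl⟩) ⟨?_, ?_⟩
    · intro x y hxy
      have := congrArg Subtype.val hxy
      simpa using this
    · rintro ⟨⟨j, x⟩, rfl⟩
      exact ⟨x, rfl⟩
  rw [Nat.card_congr e2.symm, Nat.card_eq_fintype_card, Fintype.card_fin]


/-- Refine a function `ψ : α → ι` into `f : α → ι × κ` with prescribed fiber sizes. -/
lemma exists_refine [Fintype α] [Fintype ι] [Fintype κ]
    (ψ : α → ι) (M : ι → κ → ℕ) (h : ∀ i, ∑ k, M i k = Nat.card {a // ψ a = i}) :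
    ∃ f : α → ι × κ, (∀ a, (f a).1 = ψ a) ∧ ∀ i k, Nat.card {a // f a = (i, k)} = M i k := by
  classical
  have hF : ∀ i, ∃ F : {a // ψ a = i} → κ, ∀ k, Nat.card {x // F x = k} = M i k := by
    intro i
    exact exists_fun_fib (M i) (by rw [h i, Nat.card_eq_fintype_card])
  choose F hFf using hF
  refine ⟨fun a => (ψ a, F (ψ a) ⟨a, rfl⟩), fun a => rfl, ?_⟩
  intro i k
  have key : ∀ (a : α) (hψ : ψ a = i), F (ψ a) ⟨a, rfl⟩ = F i ⟨a, hψ⟩ := by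
    intro a hψ; subst hψ; rfl
  rw [← hFf i k]
  refine (Nat.card_congr (Equiv.ofBijective
    (fun x : {x : {a // ψ a = i} // F i x = k} =>
      (⟨x.1.1, by
        rcases x with ⟨⟨a, ha⟩, hk⟩
        show (ψ a, F (ψ a) ⟨a, rfl⟩) = (i, k)
        rw [Prod.mk.injEq]
        exact ⟨ha, (key a ha).trans hk⟩⟩ :
        {a // (fun a => (ψ a, F (ψ a) ⟨a, rfl⟩)) a = (i, k)})) ⟨?_, ?_⟩)).symm
  · intro x y hxy
    simp only [Subtype.mk.injEq] at hxy
    exact Subtype.ext (Subtype.ext hxy)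
  · rintro ⟨a, ha⟩
    have ha' : (ψ a, F (ψ a) ⟨a, rfl⟩) = (i, k) := ha
    rw [Prod.mk.injEq] at ha'
    exact ⟨⟨⟨a, ha'.1⟩, (key a ha'.1).symm.trans ha'.2⟩, Subtype.ext rfl⟩

/-- There exists a permutation with prescribed transfer matrix. -/
lemma exists_perm_transfer [Fintype α] {A : Type*} [Fintype A]
    (ψ : α → A) (M : A → A → ℕ)
    (hrow : ∀ a, ∑ b, M a b = Nat.card {j // ψ j = a})
    (hcol : ∀ b, ∑ a, M a b = Nat.card {j // ψ j = b}) :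
    ∃ σ : Equiv.Perm α, ∀ a b, Nat.card {j // ψ j = a ∧ ψ (σ j) = b} = M a b := by
  classical
  obtain ⟨f, hf1, hf2⟩ := exists_refine ψ M hrow
  obtain ⟨g', hg1, hg2⟩ := exists_refine ψ (fun b a => M a b) hcol
  set g : α → A × A := fun a => (g' a).swap with hg
  have hfib : ∀ p : A × A, Nat.card {a // g a = p} = Nat.card {a // f a = p} := by
    rintro ⟨a, b⟩
    rw [hf2 a b, ← hg2 b a]
    apply Nat.card_congr
    apply Equiv.subtypeEquivRight
    intro x
    simp [hg, Prod.ext_iff, and_comm]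
  obtain ⟨τ, hτ⟩ := exists_perm_comp g f hfib
  refine ⟨τ, fun a b => ?_⟩
  rw [← hf2 a b]
  apply Nat.card_congr
  apply Equiv.subtypeEquivRight
  intro j
  have h1 : ψ j = (f j).1 := (hf1 j).symm
  have h2 : ψ (τ j) = (f j).2 := by
    have h3 : (g (τ j)).2 = (f j).2 := congrArg Prod.snd (congrFun hτ j)
    rw [← h3]
    simp only [hg, Prod.snd_swap]
    exact (hg1 (τ j)).symm
  constructor
  · rintro ⟨hja, hjb⟩
    exact Prod.ext (h1.symm.trans hja) (h2.symm.trans hjb)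
  · intro hfj
    exact ⟨h1.trans (congrArg Prod.fst hfj), h2.trans (congrArg Prod.snd hfj)⟩

/-- Orbit-fiber counting. -/
lemma card_eq_card_mul_card {G X S : Type*} (Φ : G → X)
    (hfib : ∀ x : X, Nonempty ({g // Φ g = x} ≃ S)) :
    Nat.card G = Nat.card X * Nat.card S := by
  have e : G ≃ X × S :=
    (Equiv.sigmaFiberEquiv Φ).symm.trans
      ((Equiv.sigmaCongrRight (fun x => (hfib x).some)).trans (Equiv.sigmaEquivProd X S))
  rw [Nat.card_congr e, Nat.card_prod]

/-- Number of permutations preserving a function. -/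
lemma card_stab [Fintype α] [Fintype ι] (f : α → ι) :
    Nat.card {g : Equiv.Perm α // f ∘ g = f} = ∏ i, (Nat.card {a // f a = i}).factorial := by
  classical
  rw [Nat.card_eq_fintype_card, DomMulAct.stabilizer_card]
  exact Finset.prod_congr rfl fun i _ => by rw [Nat.card_eq_fintype_card]

lemma nat_card_sigma {ι : Type*} [Fintype ι] (β : ι → Type*) [∀ i, Fintype (β i)] :
    Nat.card (Σ i, β i) = ∑ i, Nat.card (β i) := by
  simp [Nat.card_eq_fintype_card, Fintype.card_sigma]


/-- Count of maps with prescribed fiber sizes, times `∏ (m a)!`, is `n!`. -/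
lemma count_psi {n : ℕ} {A : Type*} [Fintype A] (m : A → ℕ) (hsum : ∑ a, m a = n) :
    Nat.card {ψ : Fin n → A // ∀ a, Nat.card {j // ψ j = a} = m a} * ∏ a, (m a).factorial
      = n.factorial := by
  classical
  obtain ⟨ψ₀, hψ₀⟩ := exists_fun_fib (α := Fin n) m (by simp [hsum])
  have key : ∀ (g : Equiv.Perm (Fin n)) (a : A),
      Nat.card {j // ψ₀ (g j) = a} = Nat.card {j // ψ₀ j = a} :=
    fun g a => (Nat.card_congr (g.subtypeEquiv (fun j => Iff.rfl) :
      {j // ψ₀ (g j) = a} ≃ {j // ψ₀ j = a}))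
  set X := {ψ : Fin n → A // ∀ a, Nat.card {j // ψ j = a} = m a} with hX
  have main : Nat.card (Equiv.Perm (Fin n)) =
      Nat.card X * Nat.card {h : Equiv.Perm (Fin n) // ψ₀ ∘ h = ψ₀} := by
    apply card_eq_card_mul_card
      (fun (g : Equiv.Perm (Fin n)) => (⟨ψ₀ ∘ ⇑g, fun a => (key g a).trans (hψ₀ a)⟩ : X))
    rintro ⟨ψ, hψ⟩
    obtain ⟨τ, hτ⟩ := exists_perm_comp ψ₀ ψ (fun a => (hψ₀ a).trans (hψ a).symm)
    refine ⟨(Equiv.subtypeEquivRight (q := fun g : Equiv.Perm (Fin n) => ψ₀ ∘ ⇑g = ψ) (fun g => ?_)).trans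
      ⟨fun g => ⟨g.1 * τ⁻¹, ?_⟩, fun h => ⟨h.1 * τ, ?_⟩, ?_, ?_⟩⟩
    · exact Subtype.ext_iff
    · have hg : ψ₀ ∘ ⇑g.1 = ψ := g.2
      funext j
      have h1 : ψ₀ (g.1 (τ⁻¹ j)) = ψ (τ⁻¹ j) := congrFun hg (τ⁻¹ j)
      have h2 : ψ (τ⁻¹ j) = ψ₀ (τ (τ⁻¹ j)) := (congrFun hτ (τ⁻¹ j)).symm
      simp only [Equiv.Perm.coe_mul, Function.comp_apply]
      rw [h1, h2, Equiv.Perm.apply_inv_self]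
    · funext j
      have h1 : ψ₀ (h.1 (τ j)) = ψ₀ (τ j) := congrFun h.2 (τ j)
      simp only [Equiv.Perm.coe_mul, Function.comp_apply]
      rw [h1]
      exact congrFun hτ j
    · intro g; apply Subtype.ext; simp [mul_assoc]
    · intro h; apply Subtype.ext; simp [mul_assoc]
  rw [Nat.card_eq_fintype_card, Fintype.card_perm, Fintype.card_fin, card_stab ψ₀] at main
  rw [main]
  congr 1
  exact Finset.prod_congr rfl fun a _ => by rw [hψ₀ a]

/-- Number of permutations with prescribed transfer matrix. -/
lemma count_sigma {n : ℕ} {A : Type*} [Fintype A] (ψ : Fin n → A) (m : A → ℕ) (M : A → A → ℕ)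
    (hψ : ∀ a, Nat.card {j // ψ j = a} = m a)
    (hrow : ∀ a, ∑ b, M a b = m a) (hcol : ∀ b, ∑ a, M a b = m b) :
    Nat.card {σ : Equiv.Perm (Fin n) //
        ∀ a b, Nat.card {j // ψ j = a ∧ ψ (σ j) = b} = M a b}
      * ∏ a, ∏ b, (M a b).factorial = (∏ a, (m a).factorial) ^ 2 := by
  classical
  obtain ⟨σ₀, hσ₀⟩ := exists_perm_transfer ψ M
    (fun a => (hrow a).trans (hψ a).symm) (fun b => (hcol b).trans (hψ b).symm)
  set X := {σ : Equiv.Perm (Fin n) //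
      ∀ a b, Nat.card {j // ψ j = a ∧ ψ (σ j) = b} = M a b} with hXdef
  set S := {g : Equiv.Perm (Fin n) // ψ ∘ ⇑g = ψ} with hSdef
  -- the "stabilizer" type
  set χ : Fin n → A × A := fun j => (ψ j, ψ (σ₀⁻¹ j)) with hχdef
  set S₀ := {k : Equiv.Perm (Fin n) // χ ∘ ⇑k = χ} with hS₀def
  -- fiber preservation под action
  have hact : ∀ (g h : S) (a b : A),
      Nat.card {j // ψ j = a ∧ ψ ((g.1 * σ₀ * h.1⁻¹) j) = b} = M a b := by
    intro g h a b
    rw [← hσ₀ a b]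
    refine (Nat.card_congr (Equiv.subtypeEquiv h.1 (fun j => ?_))).symm
    have e1 : ψ (h.1 j) = ψ j := congrFun h.2 j
    have e2 : ∀ x, ψ (g.1 x) = ψ x := fun x => congrFun g.2 x
    simp only [Equiv.Perm.coe_mul, Function.comp_apply, Equiv.Perm.inv_apply_self, e1, e2]
  have main : Nat.card (S × S) = Nat.card X * Nat.card S₀ := by
    apply card_eq_card_mul_card
      (fun p : S × S => (⟨p.1.1 * σ₀ * p.2.1⁻¹, hact p.1 p.2⟩ : X))
    rintro ⟨σ, hσ⟩
    -- find (g₀, h₀) mapping σ₀ to σ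
    obtain ⟨τ, hτ⟩ := exists_perm_comp (fun j => (ψ j, ψ (σ j))) (fun j => (ψ j, ψ (σ₀ j)))
      (by
        rintro ⟨a, b⟩
        have h1 : Nat.card {j // (fun j => (ψ j, ψ (σ j))) j = (a, b)}
            = Nat.card {j // ψ j = a ∧ ψ (σ j) = b} :=
          Nat.card_congr (Equiv.subtypeEquivRight (fun j => by simp [Prod.ext_iff]))
        have h2 : Nat.card {j // (fun j => (ψ j, ψ (σ₀ j))) j = (a, b)}
            = Nat.card {j // ψ j = a ∧ ψ (σ₀ j) = b} :=
          Nat.card_congr (Equiv.subtypeEquivRight (fun j => by simp [Prod.ext_iff]))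
        rw [h1, h2, hσ a b, hσ₀ a b])
    have hτ1 : ∀ j, ψ (τ j) = ψ j := fun j => (congrArg Prod.fst (congrFun hτ j))
    have hτ2 : ∀ j, ψ (σ (τ j)) = ψ (σ₀ j) := fun j => (congrArg Prod.snd (congrFun hτ j))
    set g₀ : Equiv.Perm (Fin n) := σ * τ * σ₀⁻¹ with hg₀def
    set h₀ : Equiv.Perm (Fin n) := τ with hh₀def
    have hg₀ : ψ ∘ ⇑g₀ = ψ := by
      funext j
      simp only [hg₀def, Equiv.Perm.coe_mul, Function.comp_apply]
      rw [hτ2 (σ₀⁻¹ j), Equiv.Perm.apply_inv_self]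
    have hh₀ : ψ ∘ ⇑h₀ = ψ := funext hτ1
    have hΦ₀ : g₀ * σ₀ * h₀⁻¹ = σ := by
      simp only [hg₀def, hh₀def]
      group
    have inv_pres : ∀ (k : Equiv.Perm (Fin n)) {B : Type u_4} (f : Fin n → B),
        f ∘ ⇑k = f → ∀ j, f (k⁻¹ j) = f j := by
      intro k B f hf j
      have := congrFun hf (k⁻¹ j)
      simp only [Function.comp_apply, Equiv.Perm.apply_inv_self] at this
      exact this.symm
    have hg₀' : ∀ j, ψ (g₀⁻¹ j) = ψ j := inv_pres g₀ ψ hg₀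
    have hh₀' : ∀ j, ψ (h₀⁻¹ j) = ψ j := inv_pres h₀ ψ hh₀
    have hrel'' : ∀ g h : Equiv.Perm (Fin n), g * σ₀ * h⁻¹ = σ →
        σ₀⁻¹ * (g₀⁻¹ * g) * σ₀ = h₀⁻¹ * h := by
      intro g h hrel
      have heq : g * σ₀ * h⁻¹ = g₀ * σ₀ * h₀⁻¹ := hrel.trans hΦ₀.symm
      calc σ₀⁻¹ * (g₀⁻¹ * g) * σ₀
          = σ₀⁻¹ * g₀⁻¹ * (g * σ₀ * h⁻¹) * h := by group
        _ = σ₀⁻¹ * g₀⁻¹ * (g₀ * σ₀ * h₀⁻¹) * h := by rw [heq]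
        _ = h₀⁻¹ * h := by group
    -- the fiber over σ is equivalent to S₀
    refine ⟨(Equiv.subtypeEquivRight
      (q := fun p : S × S => p.1.1 * σ₀ * p.2.1⁻¹ = σ) (fun p => ?_)).trans
      ⟨fun p => ⟨g₀⁻¹ * p.1.1.1, ?_⟩,
       fun k => ⟨(⟨g₀ * k.1, ?_⟩, ⟨h₀ * (σ₀⁻¹ * k.1 * σ₀), ?_⟩), ?_⟩, ?_, ?_⟩⟩
    · exact Subtype.ext_iff
    · -- χ ∘ (g₀⁻¹ * g) = χ  where g σ₀ h⁻¹ = σ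
      rcases p with ⟨⟨⟨g, hg⟩, ⟨h, hh⟩⟩, hrel⟩
      simp only at hrel ⊢
      have hrel' : σ₀⁻¹ * (g₀⁻¹ * g) * σ₀ = h₀⁻¹ * h := hrel'' g h hrel
      have e2 : σ₀⁻¹ * (g₀⁻¹ * g) = h₀⁻¹ * h * σ₀⁻¹ := by
        rw [← hrel']; group
      funext j
      simp only [hχdef, Function.comp_apply, Prod.mk.injEq, Equiv.Perm.coe_mul]
      constructor
      · rw [hg₀' (g j)]
        exact congrFun hg j
      · have e3 := DFunLike.congr_fun e2 j
        simp only [Equiv.Perm.coe_mul, Function.comp_apply] at e3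
        rw [e3, hh₀' (h (σ₀⁻¹ j))]
        exact congrFun hh (σ₀⁻¹ j)
    · -- ψ ∘ (g₀ * k) = ψ
      rcases k with ⟨k, hk⟩
      have hk1 : ∀ j, ψ (k j) = ψ j := fun j => congrArg Prod.fst (congrFun hk j)
      funext j
      simp only [Equiv.Perm.coe_mul, Function.comp_apply]
      exact (congrFun hg₀ (k j)).trans (hk1 j)
    · -- ψ ∘ (h₀ * (σ₀⁻¹ * k * σ₀)) = ψ
      rcases k with ⟨k, hk⟩
      have hk2 : ∀ j, ψ (σ₀⁻¹ (k j)) = ψ (σ₀⁻¹ j) := fun j =>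
        congrArg Prod.snd (congrFun hk j)
      funext j
      simp only [Equiv.Perm.coe_mul, Function.comp_apply]
      refine (congrFun hh₀ (σ₀⁻¹ (k (σ₀ j)))).trans ?_
      rw [hk2 (σ₀ j), Equiv.Perm.inv_apply_self]
    · -- (g₀ * k) * σ₀ * (h₀ * (σ₀⁻¹ * k * σ₀))⁻¹ = σ
      show (g₀ * k.1) * σ₀ * (h₀ * (σ₀⁻¹ * k.1 * σ₀))⁻¹ = σ
      rw [← hΦ₀]; group
    · -- left inverse
      rintro ⟨⟨⟨g, hg⟩, ⟨h, hh⟩⟩, hrel⟩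
      simp only at hrel
      have hrel' := hrel'' g h hrel
      apply Subtype.ext
      apply Prod.ext
      · apply Subtype.ext
        show g₀ * (g₀⁻¹ * g) = g
        group
      · apply Subtype.ext
        show h₀ * (σ₀⁻¹ * (g₀⁻¹ * g) * σ₀) = h
        rw [hrel']
        group
    · -- right inverse
      rintro ⟨k, hk⟩
      apply Subtype.ext
      show g₀⁻¹ * (g₀ * k) = k
      group
  -- now compute cardinalities
  have cS : Nat.card S = ∏ a, (m a).factorial := by
    rw [hSdef, card_stab ψ]
    exact Finset.prod_congr rfl fun a _ => by rw [hψ a]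
  have cS₀ : Nat.card S₀ = ∏ a, ∏ b, (M a b).factorial := by
    rw [hS₀def, card_stab χ]
    rw [Fintype.prod_prod_type]
    have : ∀ a b : A, Nat.card {j // χ j = (a, b)} = M b a := by
      intro a b
      rw [← hσ₀ b a]
      have e1 : {j // χ j = (a, b)} ≃ {j // ψ j = a ∧ ψ (σ₀⁻¹ j) = b} :=
        Equiv.subtypeEquivRight (fun j => by simp [hχdef, Prod.ext_iff])
      have e2 : {j // ψ j = b ∧ ψ (σ₀ j) = a} ≃ {j // ψ j = a ∧ ψ (σ₀⁻¹ j) = b} :=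
        Equiv.subtypeEquiv σ₀ (fun j => by
          simp only [Equiv.Perm.inv_apply_self]
          tauto)
      rw [Nat.card_congr e1, Nat.card_congr e2.symm]
    calc (∏ a : A, ∏ b : A, (Nat.card {j // χ j = (a, b)}).factorial)
        = ∏ a : A, ∏ b : A, (M b a).factorial := by
          exact Finset.prod_congr rfl fun a _ => Finset.prod_congr rfl fun b _ => by
            rw [this a b]
      _ = ∏ a : A, ∏ b : A, (M a b).factorial := Finset.prod_comm
  rw [Nat.card_prod, cS, cS₀, ← pow_two] at main
  exact main.symm

end CountingAux

noncomputable section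

/-- A weight on the graph with vertex set `A` and, for each `i ∈ {1,…,r}`, a directed edge
`(a,b;i)` for every pair `a b : A`: functions `v : A → [0,1]` and `e : {1,…,r} × A × A → [0,1]`
with `v a = ∑_b e i a b = ∑_b e i b a` for all `i, a`, and `∑_a v a = 1`. -/
structure Weight (r : ℕ) (A : Type*) [Fintype A] where
  v : A → ℝ
  e : Fin r → A → A → ℝ
  v_nonneg : ∀ a, 0 ≤ v a
  v_le_one : ∀ a, v a ≤ 1
  e_nonneg : ∀ i a b, 0 ≤ e i a b
  e_le_one : ∀ i a b, e i a b ≤ 1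
  row : ∀ i a, v a = ∑ b, e i a b
  col : ∀ i a, v a = ∑ b, e i b a
  total : ∑ a, v a = 1

/-- `d_*(W₁,W₂) = ∑_{i=1}^r ∑_{a,b ∈ A} |W₁(a,b;i) − W₂(a,b;i)|`. -/
def dW {r : ℕ} {A : Type*} [Fintype A] (W₁ W₂ : Weight r A) : ℝ :=
  ∑ i : Fin r, ∑ a : A, ∑ b : A, |W₁.e i a b - W₂.e i a b|

/-- `d_*(W, W_{σ,ψ})` where `W_{σ,ψ}` is the empirical weight of the tuple of permutations
`σ = (σ_1,…,σ_r)` and the map `ψ : {1,…,n} → A`, namely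
`W_{σ,ψ}(a,b;i) = |{j : ψ(j) = a, ψ(σ_i(j)) = b}| / n`. -/
def dWemp {r : ℕ} {A : Type*} [Fintype A] {n : ℕ} (W : Weight r A)
    (σs : Fin r → Equiv.Perm (Fin n)) (ψ : Fin n → A) : ℝ :=
  ∑ i : Fin r, ∑ a : A, ∑ b : A,
    |W.e i a b - (Nat.card {j : Fin n // ψ j = a ∧ ψ (σs i j) = b} : ℝ) / n|

/-- `F(W) = −∑_{i,a,b} W(a,b;i) log W(a,b;i) + (2r−1) ∑_a W(a) log W(a)`
(with the convention `0 log 0 = 0`). -/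
def FW {r : ℕ} {A : Type*} [Fintype A] (W : Weight r A) : ℝ :=
  -(∑ i : Fin r, ∑ a : A, ∑ b : A, W.e i a b * Real.log (W.e i a b)) +
    (2 * (r : ℝ) - 1) * ∑ a : A, W.v a * Real.log (W.v a)

/-- If `W` is a weight with `nW(a,b;i) ∈ ℤ` for all `a b i` (witnessed by the natural numbers
`M i a b = nW(a,b;i)`, whence also `m a = nW(a) ∈ ℤ`), then the expected number, over a
uniformly random `r`-tuple of permutations of `{1,…,n}`, of maps `ψ : {1,…,n} → A` with
`d_*(W,W_{σ,ψ}) = 0` equals `(n!)^{1−r} (∏_a (nW(a))!)^{2r−1} / ∏_{i,a,b} (nW(a,b;i))!`. -/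
theorem expected_count_exact {r : ℕ} (hr : 1 ≤ r) {A : Type*} [Fintype A]
    {n : ℕ} (hn : 0 < n) (W : Weight r A)
    (m : A → ℕ) (M : Fin r → A → A → ℕ)
    (hm : ∀ a, (m a : ℝ) = n * W.v a)
    (hM : ∀ i a b, (M i a b : ℝ) = n * W.e i a b) :
    (∑ σs : Fin r → Equiv.Perm (Fin n),
        (Nat.card {ψ : Fin n → A // dWemp W σs ψ = 0} : ℝ)) / (n.factorial : ℝ) ^ r
      = (n.factorial : ℝ) ^ ((1 : ℤ) - (r : ℤ)) *
          (∏ a : A, ((m a).factorial : ℝ)) ^ (2 * (r : ℤ) - 1) /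
          ∏ i : Fin r, ∏ a : A, ∏ b : A, ((M i a b).factorial : ℝ) := by
  classical
  have hn' : (n : ℝ) ≠ 0 := Nat.cast_ne_zero.2 hn.ne'
  -- natural number versions of the hypotheses
  have hsum : ∑ a, m a = n := by
    have : ((∑ a, m a : ℕ) : ℝ) = (n : ℝ) := by
      push_cast
      simp only [hm, ← Finset.mul_sum, W.total, mul_one]
    exact_mod_cast this
  have hrowN : ∀ i a, ∑ b, M i a b = m a := by
    intro i a
    have : ((∑ b, M i a b : ℕ) : ℝ) = (m a : ℝ) := by
      push_cast
      simp only [hM, ← Finset.mul_sum, hm a, ← W.row i a]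
    exact_mod_cast this
  have hcolN : ∀ i b, ∑ a, M i a b = m b := by
    intro i b
    have : ((∑ a, M i a b : ℕ) : ℝ) = (m b : ℝ) := by
      push_cast
      simp only [hM, ← Finset.mul_sum, hm b, ← W.col i b]
    exact_mod_cast this
  -- characterization of dWemp = 0
  have hchar : ∀ (σs : Fin r → Equiv.Perm (Fin n)) (ψ : Fin n → A),
      dWemp W σs ψ = 0 ↔
        ∀ i a b, Nat.card {j : Fin n // ψ j = a ∧ ψ (σs i j) = b} = M i a b := by
    intro σs ψ
    unfold dWemp
    rw [Finset.sum_eq_zero_iff_of_nonneg (fun i _ => Finset.sum_nonneg fun a _ =>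
      Finset.sum_nonneg fun b _ => abs_nonneg _)]
    simp only [Finset.mem_univ, true_implies]
    refine forall_congr' fun i => ?_
    rw [Finset.sum_eq_zero_iff_of_nonneg (fun a _ => Finset.sum_nonneg fun b _ =>
      abs_nonneg _)]
    simp only [Finset.mem_univ, true_implies]
    refine forall_congr' fun a => ?_
    rw [Finset.sum_eq_zero_iff_of_nonneg (fun b _ => abs_nonneg _)]
    simp only [Finset.mem_univ, true_implies]
    refine forall_congr' fun b => ?_
    rw [abs_eq_zero, sub_eq_zero]
    constructor
    · intro h
      have : (M i a b : ℝ) = (Nat.card {j : Fin n // ψ j = a ∧ ψ (σs i j) = b} : ℝ) := by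
        rw [hM i a b, h, mul_div_cancel₀ _ hn']
      exact_mod_cast this.symm
    · intro h
      rw [h]
      rw [eq_div_iff hn', mul_comm, ← hM i a b]
  -- fiber decomposition: row sums of the transfer count are fiber sizes
  have fiber_split : ∀ (σ : Equiv.Perm (Fin n)) (ψ : Fin n → A) (a : A),
      Nat.card {j // ψ j = a} = ∑ b, Nat.card {j // ψ j = a ∧ ψ (σ j) = b} := by
    intro σ ψ a
    rw [← nat_card_sigma]
    refine Nat.card_congr (Equiv.symm ?_)
    exact (Equiv.sigmaCongrRight (fun b =>
      (Equiv.subtypeSubtypeEquivSubtypeInter (fun j => ψ j = a)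
        (fun j => ψ (σ j) = b)).symm)).trans
      (Equiv.sigmaFiberEquiv (fun x : {j // ψ j = a} => ψ (σ x.1)))
  -- rewrite the numerator as a natural number
  set T : ℕ := ∑ σs : Fin r → Equiv.Perm (Fin n),
    Nat.card {ψ : Fin n → A // ∀ i a b,
      Nat.card {j : Fin n // ψ j = a ∧ ψ (σs i j) = b} = M i a b} with hT
  have hnum : (∑ σs : Fin r → Equiv.Perm (Fin n),
      (Nat.card {ψ : Fin n → A // dWemp W σs ψ = 0} : ℝ)) = (T : ℝ) := by
    rw [hT]
    push_cast
    refine Finset.sum_congr rfl fun σs _ => ?_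
    congr 1
    exact Nat.card_congr (Equiv.subtypeEquivRight (fun ψ => hchar σs ψ))
  -- swap the two sums
  have hswap : T = ∑ ψ : Fin n → A, ∏ i : Fin r,
      Nat.card {σ : Equiv.Perm (Fin n) // ∀ a b,
        Nat.card {j : Fin n // ψ j = a ∧ ψ (σ j) = b} = M i a b} := by
    rw [hT]
    rw [← nat_card_sigma (fun σs : Fin r → Equiv.Perm (Fin n) =>
      {ψ : Fin n → A // ∀ i a b,
        Nat.card {j : Fin n // ψ j = a ∧ ψ (σs i j) = b} = M i a b})]
    rw [Nat.card_congr
      (⟨fun x => ⟨x.2.1, x.1, x.2.2⟩, fun x => ⟨x.2.1, x.1, x.2.2⟩,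
        fun x => rfl, fun x => rfl⟩ :
      (Σ σs : Fin r → Equiv.Perm (Fin n), {ψ : Fin n → A // ∀ i a b,
        Nat.card {j : Fin n // ψ j = a ∧ ψ (σs i j) = b} = M i a b}) ≃
      (Σ ψ : Fin n → A, {σs : Fin r → Equiv.Perm (Fin n) // ∀ i a b,
        Nat.card {j : Fin n // ψ j = a ∧ ψ (σs i j) = b} = M i a b}))]
    rw [nat_card_sigma]
    refine Finset.sum_congr rfl fun ψ _ => ?_
    rw [Nat.card_congr (Equiv.subtypePiEquivPi (β := fun _ : Fin r => Equiv.Perm (Fin n))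
      (p := fun i σ => ∀ a b, Nat.card {j : Fin n // ψ j = a ∧ ψ (σ j) = b} = M i a b)),
      Nat.card_pi]
  -- per-ψ evaluation
  set C : ℕ := (∏ a, (m a).factorial) ^ (2 * r) with hC
  set Q : ℕ := ∏ i : Fin r, ∏ a : A, ∏ b : A, (M i a b).factorial with hQ
  have hper : ∀ ψ : Fin n → A,
      (∏ i : Fin r, Nat.card {σ : Equiv.Perm (Fin n) // ∀ a b,
        Nat.card {j : Fin n // ψ j = a ∧ ψ (σ j) = b} = M i a b}) * Q
        = if (∀ a, Nat.card {j // ψ j = a} = m a) then C else 0 := by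
    intro ψ
    by_cases hgood : ∀ a, Nat.card {j // ψ j = a} = m a
    · rw [if_pos hgood, hQ, hC, ← Finset.prod_mul_distrib]
      have heach : ∀ i : Fin r, Nat.card {σ : Equiv.Perm (Fin n) // ∀ a b,
          Nat.card {j : Fin n // ψ j = a ∧ ψ (σ j) = b} = M i a b}
            * (∏ a, ∏ b, (M i a b).factorial) = (∏ a, (m a).factorial) ^ 2 :=
        fun i => count_sigma ψ m (M i) hgood (hrowN i) (hcolN i)
      rw [Finset.prod_congr rfl fun i _ => heach i, Finset.prod_const, Finset.card_univ,
        Fintype.card_fin, ← pow_mul, mul_comm 2 r]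
    · rw [if_neg hgood]
      apply mul_eq_zero_of_left
      obtain ⟨a₀, ha₀⟩ := not_forall.1 hgood
      refine Finset.prod_eq_zero (Finset.mem_univ (⟨0, hr⟩ : Fin r)) ?_
      rw [Nat.card_eq_zero]
      left
      rw [isEmpty_subtype]
      intro σ hσ
      exact ha₀ (by rw [fiber_split σ ψ a₀,
        Finset.sum_congr rfl fun b _ => hσ a₀ b, hrowN ⟨0, hr⟩ a₀])
  -- sum over ψ
  have hTQ : T * Q = Nat.card {ψ : Fin n → A // ∀ a, Nat.card {j // ψ j = a} = m a} * C := by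
    rw [hswap, Finset.sum_mul]
    rw [Finset.sum_congr rfl fun ψ _ => hper ψ]
    rw [Finset.sum_ite, Finset.sum_const, Finset.sum_const_zero, add_zero, smul_eq_mul,
      Nat.card_eq_fintype_card, Fintype.card_subtype]
  -- the master natural-number identity
  have hpsi := count_psi m hsum
  -- move to the reals
  set P : ℝ := ∏ a : A, ((m a).factorial : ℝ) with hP
  set F : ℝ := (n.factorial : ℝ) with hF
  set QR : ℝ := ∏ i : Fin r, ∏ a : A, ∏ b : A, ((M i a b).factorial : ℝ) with hQR
  have hQcast : (Q : ℝ) = QR := by rw [hQ, hQR]; push_cast; ring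
  have hPpos : 0 < P := Finset.prod_pos fun a _ => by
    exact_mod_cast (m a).factorial_pos
  have hQpos : 0 < QR := Finset.prod_pos fun i _ => Finset.prod_pos fun a _ =>
    Finset.prod_pos fun b _ => by exact_mod_cast (M i a b).factorial_pos
  have hFpos : 0 < F := by rw [hF]; exact_mod_cast n.factorial_pos
  have hmaster : (T : ℝ) * QR * P = F * P ^ (2 * r) := by
    have : ((T * Q * ∏ a, (m a).factorial : ℕ) : ℝ)
        = ((n.factorial * (∏ a, (m a).factorial) ^ (2 * r) : ℕ) : ℝ) := by
      congr 1
      calc T * Q * ∏ a, (m a).factorial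
          = Nat.card {ψ : Fin n → A // ∀ a, Nat.card {j // ψ j = a} = m a} * C
              * ∏ a, (m a).factorial := by rw [hTQ]
        _ = (Nat.card {ψ : Fin n → A // ∀ a, Nat.card {j // ψ j = a} = m a}
              * ∏ a, (m a).factorial) * C := by ring
        _ = n.factorial * (∏ a, (m a).factorial) ^ (2 * r) := by rw [hpsi, hC]
    push_cast at this
    rw [hQcast] at this
    rw [hP, hF]
    exact this
  have hFne := hFpos.ne'
  have hPne := hPpos.ne'
  have hQne := hQpos.ne'
  have h1 : F ^ ((1 : ℤ) - (r : ℤ)) = F / F ^ r := by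
    rw [zpow_sub₀ hFne, zpow_one, zpow_natCast]
  have h2 : P ^ (2 * (r : ℤ) - 1) = P ^ (2 * r) / P := by
    rw [zpow_sub₀ hPne, zpow_one,
      show (2 * (r : ℤ)) = ((2 * r : ℕ) : ℤ) by push_cast; ring, zpow_natCast]
  rw [hnum, h1, h2]
  have hFr : F ^ r ≠ 0 := pow_ne_zero _ hFne
  field_simp
  linear_combination hmaster
end
end

section
/- Let A be a finite set and n a positive integer. Let m : A → ℕ and M : A × A → ℕ satisfy Σ_{a∈A} m(a) = n and, for every a ∈ A, Σ_{b∈A} M(a,b) = Σ_{b∈A} M(b,a) = m(a). Let ψ_0 : {1,…,n} → A be a map with |ψ_0⁻¹(a)| = m(a) for all a ∈ A. Then the number of permutations τ ∈ Sym(n) such that |{1 ≤ j ≤ n : ψ_0(j) = a and ψ_0(τ(j)) = b}| = M(a,b) for all a,b ∈ A equals (Π_{a∈A} m(a)!)² / (Π_{a,b∈A} M(a,b)!). -/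
open Finset

/-- Equivalences preserving labels correspond to families of fiberwise equivalences. -/
noncomputable def labelEquivFamily {A X Y : Type*} (p : X → A) (q : Y → A) :
    {e : X ≃ Y // ∀ x, q (e x) = p x} ≃ ∀ a, ({x // p x = a} ≃ {y // q y = a}) where
  toFun e a := (e.1.subtypeEquiv (fun x => by rw [e.2 x]))
  invFun u := ⟨Equiv.ofFiberEquiv u, fun x => Equiv.ofFiberEquiv_map u x⟩
  left_inv e := by
    ext x
    simp [Equiv.ofFiberEquiv, Equiv.sigmaFiberEquiv]
  right_inv u := by
    ext a x
    simp [Equiv.ofFiberEquiv, Equiv.sigmaFiberEquiv]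
    obtain ⟨x, hx⟩ := x
    subst hx
    rfl

lemma card_labelEquiv {A X Y : Type*} [Fintype A] [Fintype X] [Fintype Y]
    (p : X → A) (q : Y → A)
    (h : ∀ a, Nat.card {x // p x = a} = Nat.card {y // q y = a}) :
    Nat.card {e : X ≃ Y // ∀ x, q (e x) = p x}
      = ∏ a : A, (Nat.card {x // p x = a}).factorial := by
  classical
  rw [Nat.card_congr (labelEquivFamily p q), Nat.card_pi]
  refine Finset.prod_congr rfl fun a _ => ?_
  have : Nat.card {x // p x = a} = Nat.card {y // q y = a} := h a
  simp only [Nat.card_eq_fintype_card] at this ⊢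
  rw [Fintype.card_equiv (Fintype.equivOfCardEq this)]

def fiberFstEquiv {A : Type*} {beta : A → Type*} (a : A) :
    {s : Σ a', beta a' // s.1 = a} ≃ beta a where
  toFun s := s.2 ▸ s.1.2
  invFun b := ⟨⟨a, b⟩, rfl⟩
  left_inv := by rintro ⟨⟨a', b⟩, h⟩; subst h; rfl
  right_inv b := rfl

lemma exists_map_with_fibers {A X : Type*} [Fintype A] [Fintype X] (k : A → ℕ)
    (h : Fintype.card X = ∑ a : A, k a) :
    ∃ f : X → A, ∀ a, Nat.card {x // f x = a} = k a := by
  classical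
  have hc : Fintype.card X = Fintype.card (Σ a : A, Fin (k a)) := by
    simp [Fintype.card_sigma, h]
  obtain e := Fintype.equivOfCardEq hc
  refine ⟨fun x => (e x).1, fun a => ?_⟩
  have E : {x // (e x).1 = a} ≃ Fin (k a) :=
    (e.subtypeEquiv fun x => Iff.rfl).trans (fiberFstEquiv a)
  rw [Nat.card_congr E]; simp

lemma card_functions_with_fibers {A X : Type*} [Fintype A] [Fintype X] (k : A → ℕ)
    (h : Fintype.card X = ∑ a : A, k a) :
    Nat.card {f : X → A // ∀ a, Nat.card {x // f x = a} = k a} * ∏ a : A, (k a).factorial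
      = (Fintype.card X).factorial := by
  classical
  obtain ⟨f₀, hf₀⟩ := exists_map_with_fibers k h
  have hF : ∀ σ : X ≃ X, ∀ a, Nat.card {x // f₀ (σ x) = a} = k a := by
    intro σ a
    exact (Nat.card_congr (σ.subtypeEquiv (p := fun x => f₀ (σ x) = a)
      (q := fun y => f₀ y = a) fun x => Iff.rfl)).trans (hf₀ a)
  let F : (X ≃ X) → {f : X → A // ∀ a, Nat.card {x // f x = a} = k a} :=
    fun σ => ⟨fun x => f₀ (σ x), hF σ⟩
  have E := (Equiv.sigmaFiberEquiv F).symm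
  have hfib : ∀ f, Nat.card {σ // F σ = f} = ∏ a : A, (k a).factorial := by
    intro f
    have E2 : {σ // F σ = f} ≃ {σ : X ≃ X // ∀ x, f₀ (σ x) = f.1 x} :=
      Equiv.subtypeEquivRight fun σ => by
        simp [F, Subtype.ext_iff, funext_iff]
    rw [Nat.card_congr E2, card_labelEquiv f.1 f₀ (fun a => by rw [f.2 a, hf₀ a])]
    exact Finset.prod_congr rfl fun a _ => by rw [f.2 a]
  have key : Nat.card (X ≃ X)
      = Nat.card {f : X → A // ∀ a, Nat.card {x // f x = a} = k a}
        * ∏ a : A, (k a).factorial := by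
    rw [Nat.card_congr E]
    have h2 : Nat.card ((f : {f : X → A // ∀ a, Nat.card {x // f x = a} = k a}) × {σ // F σ = f})
        = ∑ f : {f : X → A // ∀ a, Nat.card {x // f x = a} = k a}, Nat.card {σ // F σ = f} := by
      rw [Nat.card_eq_fintype_card, Fintype.card_sigma]
      exact Finset.sum_congr rfl fun f _ => Nat.card_eq_fintype_card.symm
    rw [h2, Finset.sum_congr rfl (fun f _ => hfib f), Finset.sum_const, Finset.card_univ,
      smul_eq_mul, Nat.card_eq_fintype_card]
  rw [← key, Nat.card_eq_fintype_card, Fintype.card_equiv (Equiv.refl X)]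


/-- Let `m : A → ℕ` and `M : A × A → ℕ` satisfy `∑_a m(a) = n`, and for every `a`,
`∑_b M(a,b) = ∑_b M(b,a) = m(a)`. If `ψ₀ : {1,…,n} → A` has `|ψ₀⁻¹(a)| = m(a)` for all `a`,
then the number of permutations `τ ∈ Sym(n)` with `|{j : ψ₀(j) = a, ψ₀(τ(j)) = b}| = M(a,b)`
for all `a, b` equals `(∏_a m(a)!)² / ∏_{a,b} M(a,b)!`. -/
theorem count_permutations_with_transition_counts
    {A : Type*} [Fintype A] {n : ℕ} (hn : 0 < n)
    (m : A → ℕ) (M : A → A → ℕ)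
    (hmn : ∑ a : A, m a = n)
    (hrow : ∀ a, ∑ b : A, M a b = m a)
    (hcol : ∀ a, ∑ b : A, M b a = m a)
    (ψ₀ : Fin n → A) (hψ₀ : ∀ a, Nat.card {j : Fin n // ψ₀ j = a} = m a) :
    (Nat.card {τ : Equiv.Perm (Fin n) //
        ∀ a b, Nat.card {j : Fin n // ψ₀ j = a ∧ ψ₀ (τ j) = b} = M a b} : ℝ)
      = (∏ a : A, ((m a).factorial : ℝ)) ^ 2 /
          ∏ a : A, ∏ b : A, ((M a b).factorial : ℝ) := by
  classical
  -- ## Step A : counting label functions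
  -- the restriction equivalence
  let E1 : (Fin n → A) ≃ (∀ a, {j : Fin n // ψ₀ j = a} → A) :=
    { toFun := fun φ a x => φ x.1
      invFun := fun g j => g (ψ₀ j) ⟨j, rfl⟩
      left_inv := fun φ => rfl
      right_inv := fun g => by
        funext a x
        obtain ⟨j, hj⟩ := x
        subst hj
        rfl }
  have hcount : ∀ (φ : Fin n → A) (a b : A),
      Nat.card {j : Fin n // ψ₀ j = a ∧ φ j = b}
        = Nat.card {x : {j : Fin n // ψ₀ j = a} // φ x.1 = b} :=
    fun φ a b => Nat.card_congr
      (Equiv.subtypeSubtypeEquivSubtypeInter (fun j => ψ₀ j = a) (fun j => φ j = b)).symm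
  let EΦ : {φ : Fin n → A // ∀ a b, Nat.card {j : Fin n // ψ₀ j = a ∧ φ j = b} = M a b}
      ≃ ∀ a, {g : {j : Fin n // ψ₀ j = a} → A //
          ∀ b, Nat.card {x // g x = b} = M a b} :=
    (Equiv.subtypeEquiv E1 (fun φ => by
      constructor
      · intro hφ a b
        exact (hcount φ a b).symm.trans (hφ a b)
      · intro hφ a b
        exact (hcount φ a b).trans (hφ a b))).trans (Equiv.subtypePiEquivPi)
  have hfibcard : ∀ a, Fintype.card {j : Fin n // ψ₀ j = a} = m a := by
    intro a
    rw [← Nat.card_eq_fintype_card]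
    exact hψ₀ a
  have hstepA1 : ∀ a,
      Nat.card {g : {j : Fin n // ψ₀ j = a} → A // ∀ b, Nat.card {x // g x = b} = M a b}
        * ∏ b : A, (M a b).factorial = (m a).factorial := by
    intro a
    have := card_functions_with_fibers (X := {j : Fin n // ψ₀ j = a}) (M a)
      (by rw [hfibcard a, hrow a])
    rwa [hfibcard a] at this
  have hstepA : Nat.card {φ : Fin n → A //
        ∀ a b, Nat.card {j : Fin n // ψ₀ j = a ∧ φ j = b} = M a b}
      * ∏ a : A, ∏ b : A, (M a b).factorial = ∏ a : A, (m a).factorial := by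
    rw [Nat.card_congr EΦ, Nat.card_pi, ← Finset.prod_mul_distrib]
    exact Finset.prod_congr rfl fun a _ => hstepA1 a
  -- ## Step B : counting permutations above each label function
  set Φ := {φ : Fin n → A // ∀ a b, Nat.card {j : Fin n // ψ₀ j = a ∧ φ j = b} = M a b}
    with hΦ
  set P := {τ : Equiv.Perm (Fin n) //
      ∀ a b, Nat.card {j : Fin n // ψ₀ j = a ∧ ψ₀ (τ j) = b} = M a b} with hP
  have hφfib : ∀ (φ : Φ) (b : A), Nat.card {j : Fin n // φ.1 j = b} = m b := by
    intro φ b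
    have e : {j : Fin n // φ.1 j = b}
        ≃ Σ a : A, {j : Fin n // ψ₀ j = a ∧ φ.1 j = b} :=
      { toFun := fun j => ⟨ψ₀ j.1, j.1, rfl, j.2⟩
        invFun := fun s => ⟨s.2.1, s.2.2.2⟩
        left_inv := fun j => rfl
        right_inv := fun s => by
          obtain ⟨a, j, h1, h2⟩ := s
          subst h1
          rfl }
    rw [Nat.card_congr e, Nat.card_eq_fintype_card, Fintype.card_sigma]
    rw [Finset.sum_congr rfl (fun a _ => by
      rw [← Nat.card_eq_fintype_card, φ.2 a b])]
    exact hcol b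
  let G : P → Φ := fun τ => ⟨fun j => ψ₀ (τ.1 j), fun a b => τ.2 a b⟩
  have EP := (Equiv.sigmaFiberEquiv G).symm
  have hfib2 : ∀ φ : Φ, Nat.card {τ : P // G τ = φ} = ∏ b : A, (m b).factorial := by
    intro φ
    have e2 : {τ : P // G τ = φ}
        ≃ {σ : Equiv.Perm (Fin n) // ∀ j, ψ₀ (σ j) = φ.1 j} :=
      { toFun := fun t => ⟨t.1.1, fun j => congrFun (congrArg Subtype.val t.2) j⟩
        invFun := fun s => ⟨⟨s.1, fun a b => by
            rw [Nat.card_congr (Equiv.subtypeEquivRight (fun j => by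
              rw [s.2 j] : ∀ j, (ψ₀ j = a ∧ ψ₀ (s.1 j) = b) ↔ (ψ₀ j = a ∧ φ.1 j = b)))]
            exact φ.2 a b⟩, Subtype.ext (funext s.2)⟩
        left_inv := fun t => Subtype.ext (Subtype.ext rfl)
        right_inv := fun s => rfl }
    rw [Nat.card_congr e2,
      card_labelEquiv φ.1 ψ₀ (fun b => by rw [hφfib φ b, hψ₀ b])]
    exact Finset.prod_congr rfl fun b _ => by rw [hφfib φ b]
  have hstepB : Nat.card P = Nat.card Φ * ∏ b : A, (m b).factorial := by
    rw [Nat.card_congr EP]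
    have h2 : Nat.card ((φ : Φ) × {τ : P // G τ = φ})
        = ∑ φ : Φ, Nat.card {τ : P // G τ = φ} := by
      rw [Nat.card_eq_fintype_card, Fintype.card_sigma]
      exact Finset.sum_congr rfl fun φ _ => Nat.card_eq_fintype_card.symm
    rw [h2, Finset.sum_congr rfl (fun φ _ => hfib2 φ), Finset.sum_const, Finset.card_univ,
      smul_eq_mul, Nat.card_eq_fintype_card]
  -- ## Final arithmetic
  have hnat : Nat.card P * ∏ a : A, ∏ b : A, (M a b).factorial
      = (∏ a : A, (m a).factorial) * ∏ a : A, (m a).factorial := by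
    rw [hstepB, mul_assoc, mul_comm (∏ b : A, (m b).factorial), ← mul_assoc, hstepA]
  have hMne : (∏ a : A, ∏ b : A, ((M a b).factorial : ℝ)) ≠ 0 := by
    refine ne_of_gt (Finset.prod_pos fun a _ => Finset.prod_pos fun b _ => ?_)
    exact_mod_cast (M a b).factorial_pos
  rw [eq_div_iff hMne, sq]
  exact_mod_cast hnat
end

section
/- Fix an integer r ≥ 1 and a finite set A. There exists a constant k > 0, depending only on r and |A| (one may take k = r|A|²), such that for every weight W and every positive integer n there exists a weight W̃ with nW̃(a,b;i) ∈ ℤ for all a,b ∈ A and i ∈ {1,…,r} (so that q_{W̃} is finite and divides n) and d_*(W, W̃) ≤ k/n. -/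
open MeasureTheory Real Filter

noncomputable section

namespace WtAux

open scoped Classical

variable {r : ℕ} {A : Type*} [Fintype A]

/-- cumulative sums of `n * W.e i` w.r.t. the ordering given by `ε`. -/
def Scum (W : Weight r A) (n : ℕ) (ε : A ≃ Fin (Fintype.card A)) (i : Fin r)
    (p q : ℕ) : ℝ :=
  ∑ a : A, ∑ b : A, if (ε a : ℕ) < p ∧ (ε b : ℕ) < q then (n : ℝ) * W.e i a b else 0

/-- cumulative sums of `n * W.v`. -/
def Vcum (W : Weight r A) (n : ℕ) (ε : A ≃ Fin (Fintype.card A)) (p : ℕ) : ℝ :=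
  ∑ a : A, if (ε a : ℕ) < p then (n : ℝ) * W.v a else 0

variable (W : Weight r A) (n : ℕ) (ε : A ≃ Fin (Fintype.card A))

lemma Scum_zero_right (i : Fin r) (p : ℕ) : Scum W n ε i p 0 = 0 := by
  simp [Scum]

lemma Vcum_zero : Vcum W n ε 0 = 0 := by simp [Vcum]

lemma Vcum_mono (p : ℕ) : Vcum W n ε p ≤ Vcum W n ε (p + 1) := by
  refine Finset.sum_le_sum fun a _ => ?_
  have h0 : (0:ℝ) ≤ (n : ℝ) * W.v a :=
    mul_nonneg (Nat.cast_nonneg n) (W.v_nonneg a)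
  split_ifs with h1 h2 <;> first | rfl | exact h0 | omega

lemma Vcum_card : Vcum W n ε (Fintype.card A) = n := by
  unfold Vcum
  have : ∀ a : A, ((ε a : ℕ) < Fintype.card A) := fun a => (ε a).isLt
  simp only [this, if_true]
  rw [← Finset.mul_sum, W.total, mul_one]

lemma Scum_card_right (i : Fin r) (p : ℕ) :
    Scum W n ε i p (Fintype.card A) = Vcum W n ε p := by
  unfold Scum Vcum
  refine Finset.sum_congr rfl fun a _ => ?_
  by_cases h : (ε a : ℕ) < p
  · simp only [h, true_and, if_true, Fin.is_lt]
    rw [← Finset.mul_sum, ← W.row]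
  · simp [h]

lemma Scum_card_left (i : Fin r) (q : ℕ) :
    Scum W n ε i (Fintype.card A) q = Vcum W n ε q := by
  unfold Scum Vcum
  rw [Finset.sum_comm]
  refine Finset.sum_congr rfl fun b _ => ?_
  by_cases h : (ε b : ℕ) < q
  · simp only [h, and_true, if_true, Fin.is_lt, true_and]
    rw [← Finset.mul_sum, ← W.col]
  · simp [h]

lemma Scum_diff (i : Fin r) (a b : A) :
    Scum W n ε i ((ε a : ℕ) + 1) ((ε b : ℕ) + 1) - Scum W n ε i ((ε a : ℕ) + 1) (ε b : ℕ)
      - Scum W n ε i (ε a : ℕ) ((ε b : ℕ) + 1) + Scum W n ε i (ε a : ℕ) (ε b : ℕ)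
      = (n : ℝ) * W.e i a b := by
  unfold Scum
  rw [← Finset.sum_sub_distrib, ← Finset.sum_sub_distrib, ← Finset.sum_add_distrib]
  have key : ∀ x : A,
      ((∑ y : A, if (ε x : ℕ) < (ε a : ℕ) + 1 ∧ (ε y : ℕ) < (ε b : ℕ) + 1 then (n:ℝ) * W.e i x y else 0)
        - ∑ y : A, if (ε x : ℕ) < (ε a : ℕ) + 1 ∧ (ε y : ℕ) < (ε b : ℕ) then (n:ℝ) * W.e i x y else 0)
        - (∑ y : A, if (ε x : ℕ) < (ε a : ℕ) ∧ (ε y : ℕ) < (ε b : ℕ) + 1 then (n:ℝ) * W.e i x y else 0)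
        + (∑ y : A, if (ε x : ℕ) < (ε a : ℕ) ∧ (ε y : ℕ) < (ε b : ℕ) then (n:ℝ) * W.e i x y else 0)
      = ∑ y : A, if x = a ∧ y = b then (n:ℝ) * W.e i x y else 0 := by
    intro x
    rw [← Finset.sum_sub_distrib, ← Finset.sum_sub_distrib, ← Finset.sum_add_distrib]
    refine Finset.sum_congr rfl fun y _ => ?_
    have hxa : x = a ↔ (ε x : ℕ) = (ε a : ℕ) := by
      constructor
      · rintro rfl; rfl
      · intro h; exact ε.injective (Fin.ext h)
    have hyb : y = b ↔ (ε y : ℕ) = (ε b : ℕ) := by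
      constructor
      · rintro rfl; rfl
      · intro h; exact ε.injective (Fin.ext h)
    simp only [hxa, hyb]
    split_ifs <;> first | (exfalso; omega) | ring
  rw [Finset.sum_congr rfl fun x _ => key x]
  simp [ite_and, Finset.sum_ite_eq', Finset.mem_univ]


/-- the rounded integer edge weights -/
def Yint (W : Weight r A) (n : ℕ) (ε : A ≃ Fin (Fintype.card A)) (i : Fin r) (a b : A) : ℤ :=
  ⌊Scum W n ε i ((ε a : ℕ) + 1) ((ε b : ℕ) + 1)⌋ - ⌊Scum W n ε i ((ε a : ℕ) + 1) (ε b : ℕ)⌋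
    - ⌊Scum W n ε i (ε a : ℕ) ((ε b : ℕ) + 1)⌋ + ⌊Scum W n ε i (ε a : ℕ) (ε b : ℕ)⌋

/-- the rounded integer vertex weights -/
def tint (W : Weight r A) (n : ℕ) (ε : A ≃ Fin (Fintype.card A)) (a : A) : ℤ :=
  ⌊Vcum W n ε ((ε a : ℕ) + 1)⌋ - ⌊Vcum W n ε (ε a : ℕ)⌋

lemma Yint_close (i : Fin r) (a b : A) :
    |((Yint W n ε i a b : ℝ)) - (n : ℝ) * W.e i a b| < 2 := by
  have hd := Scum_diff W n ε i a b
  set S1 := Scum W n ε i ((ε a : ℕ) + 1) ((ε b : ℕ) + 1)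
  set S2 := Scum W n ε i ((ε a : ℕ) + 1) (ε b : ℕ)
  set S3 := Scum W n ε i (ε a : ℕ) ((ε b : ℕ) + 1)
  set S4 := Scum W n ε i (ε a : ℕ) (ε b : ℕ)
  have h1 := Int.floor_le S1
  have h1' := Int.sub_one_lt_floor S1
  have h2 := Int.floor_le S2
  have h2' := Int.sub_one_lt_floor S2
  have h3 := Int.floor_le S3
  have h3' := Int.sub_one_lt_floor S3
  have h4 := Int.floor_le S4
  have h4' := Int.sub_one_lt_floor S4
  rw [abs_lt]
  unfold Yint
  push_cast
  constructor <;> nlinarith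

lemma tint_nonneg (a : A) : 0 ≤ tint W n ε a := by
  unfold tint
  have := Int.floor_le_floor (R := ℝ) (Vcum_mono W n ε (ε a : ℕ))
  omega

lemma sum_Yint_row (i : Fin r) (a : A) :
    ∑ b : A, Yint W n ε i a b = tint W n ε a := by
  have hre : ∀ b : A, Yint W n ε i a b =
      (fun q : ℕ => ⌊Scum W n ε i ((ε a : ℕ) + 1) (q+1)⌋ - ⌊Scum W n ε i (ε a : ℕ) (q+1)⌋
        - (⌊Scum W n ε i ((ε a : ℕ) + 1) q⌋ - ⌊Scum W n ε i (ε a : ℕ) q⌋)) (ε b : ℕ) := by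
    intro b; unfold Yint; ring
  rw [Finset.sum_congr rfl fun b _ => hre b]
  set g : ℕ → ℤ := fun q => ⌊Scum W n ε i ((ε a : ℕ) + 1) q⌋ - ⌊Scum W n ε i (ε a : ℕ) q⌋ with hg
  have h1 : ∑ b : A, (g ((ε b : ℕ) + 1) - g (ε b : ℕ)) = ∑ q : Fin (Fintype.card A), (g ((q : ℕ) + 1) - g (q : ℕ)) :=
    Fintype.sum_equiv ε _ _ (fun b => rfl)
  have h2 : ∑ q : Fin (Fintype.card A), (g ((q : ℕ) + 1) - g (q : ℕ))
      = ∑ q ∈ Finset.range (Fintype.card A), (g (q + 1) - g q) :=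
    Fin.sum_univ_eq_sum_range (fun q => g (q + 1) - g q) _
  calc ∑ b : A, (g ((ε b : ℕ) + 1) - g (ε b : ℕ)) = g (Fintype.card A) - g 0 := by
        rw [h1, h2, Finset.sum_range_sub]
    _ = tint W n ε a := by
        simp only [hg, Scum_card_right, Scum_zero_right, tint]
        norm_num

lemma sum_Yint_col (i : Fin r) (b : A) :
    ∑ a : A, Yint W n ε i a b = tint W n ε b := by
  have hre : ∀ a : A, Yint W n ε i a b =
      (fun p : ℕ => ⌊Scum W n ε i (p+1) ((ε b : ℕ) + 1)⌋ - ⌊Scum W n ε i (p+1) (ε b : ℕ)⌋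
        - (⌊Scum W n ε i p ((ε b : ℕ) + 1)⌋ - ⌊Scum W n ε i p (ε b : ℕ)⌋)) (ε a : ℕ) := by
    intro a; unfold Yint; ring
  rw [Finset.sum_congr rfl fun a _ => hre a]
  set g : ℕ → ℤ := fun p => ⌊Scum W n ε i p ((ε b : ℕ) + 1)⌋ - ⌊Scum W n ε i p (ε b : ℕ)⌋ with hg
  have h1 : ∑ a : A, (g ((ε a : ℕ) + 1) - g (ε a : ℕ)) = ∑ q : Fin (Fintype.card A), (g ((q : ℕ) + 1) - g (q : ℕ)) :=
    Fintype.sum_equiv ε _ _ (fun a => rfl)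
  have h2 : ∑ q : Fin (Fintype.card A), (g ((q : ℕ) + 1) - g (q : ℕ))
      = ∑ q ∈ Finset.range (Fintype.card A), (g (q + 1) - g q) :=
    Fin.sum_univ_eq_sum_range (fun q => g (q + 1) - g q) _
  calc ∑ a : A, (g ((ε a : ℕ) + 1) - g (ε a : ℕ)) = g (Fintype.card A) - g 0 := by
        rw [h1, h2, Finset.sum_range_sub]
    _ = tint W n ε b := by
        simp only [hg, Scum_card_left, tint]
        have z1 : Scum W n ε i 0 ((ε b : ℕ) + 1) = 0 := by simp [Scum]
        have z2 : Scum W n ε i 0 (ε b : ℕ) = 0 := by simp [Scum]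
        rw [z1, z2]
        norm_num

lemma sum_tint : ∑ a : A, tint W n ε a = n := by
  set g : ℕ → ℤ := fun p => ⌊Vcum W n ε p⌋ with hg
  have h1 : ∑ a : A, (g ((ε a : ℕ) + 1) - g (ε a : ℕ)) = ∑ q : Fin (Fintype.card A), (g ((q : ℕ) + 1) - g (q : ℕ)) :=
    Fintype.sum_equiv ε _ _ (fun a => rfl)
  have h2 : ∑ q : Fin (Fintype.card A), (g ((q : ℕ) + 1) - g (q : ℕ))
      = ∑ q ∈ Finset.range (Fintype.card A), (g (q + 1) - g q) :=
    Fin.sum_univ_eq_sum_range (fun q => g (q + 1) - g q) _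
  have : ∑ a : A, tint W n ε a = g (Fintype.card A) - g 0 := by
    rw [show (∑ a : A, tint W n ε a) = ∑ a : A, (g ((ε a : ℕ) + 1) - g (ε a : ℕ)) from rfl,
      h1, h2, Finset.sum_range_sub]
  rw [this, hg]
  simp only [Vcum_card, Vcum_zero]
  simp


lemma sum_sum_e (W : Weight r A) (i : Fin r) : ∑ a : A, ∑ b : A, W.e i a b = 1 := by
  rw [Finset.sum_congr rfl fun a _ => (W.row i a).symm, W.total]

theorem exists_round (hn : 0 < n) (hW : ∀ i a b, 2 ≤ (n : ℝ) * W.e i a b) :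
    ∃ Wt : Weight r A, (∀ i a b, ∃ z : ℕ, (z : ℝ) = n * Wt.e i a b) ∧
      ∀ i a b, |W.e i a b - Wt.e i a b| ≤ 2 / n := by
  obtain ⟨ε⟩ : Nonempty (A ≃ Fin (Fintype.card A)) := ⟨Fintype.equivFin A⟩
  have hn' : (0:ℝ) < n := by exact_mod_cast hn
  have hYpos : ∀ i a b, (0:ℝ) ≤ (Yint W n ε i a b : ℝ) := by
    intro i a b
    have h := (abs_lt.mp (Yint_close W n ε i a b)).1
    have := hW i a b
    linarith
  have hYposZ : ∀ i a b, 0 ≤ Yint W n ε i a b := by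
    intro i a b; exact_mod_cast hYpos i a b
  have htn : ∀ a, tint W n ε a ≤ n := by
    intro a
    have h1 : tint W n ε a ≤ ∑ a' : A, tint W n ε a' :=
      Finset.single_le_sum (fun a' _ => tint_nonneg W n ε a') (Finset.mem_univ a)
    rw [sum_tint] at h1; exact h1
  have hYt : ∀ i a b, Yint W n ε i a b ≤ tint W n ε a := by
    intro i a b
    have h1 : Yint W n ε i a b ≤ ∑ b' : A, Yint W n ε i a b' :=
      Finset.single_le_sum (fun b' _ => hYposZ i a b') (Finset.mem_univ b)
    rw [sum_Yint_row] at h1; exact h1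
  refine ⟨{
    v := fun a => (tint W n ε a : ℝ) / n
    e := fun i a b => (Yint W n ε i a b : ℝ) / n
    v_nonneg := fun a => div_nonneg (by exact_mod_cast tint_nonneg W n ε a) hn'.le
    v_le_one := fun a => by
      rw [div_le_one hn']; exact_mod_cast htn a
    e_nonneg := fun i a b => div_nonneg (hYpos i a b) hn'.le
    e_le_one := fun i a b => by
      rw [div_le_one hn']
      exact_mod_cast le_trans (hYt i a b) (htn a)
    row := fun i a => by
      rw [← Finset.sum_div, ← Int.cast_sum, sum_Yint_row]
    col := fun i b => by
      rw [← Finset.sum_div, ← Int.cast_sum, sum_Yint_col]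
    total := by
      rw [← Finset.sum_div]
      rw [show (∑ a : A, ((tint W n ε a : ℝ))) = ((n : ℝ)) by exact_mod_cast sum_tint W n ε]
      exact div_self hn'.ne' }, ?_, ?_⟩
  · intro i a b
    refine ⟨(Yint W n ε i a b).toNat, ?_⟩
    have h1 : ((Yint W n ε i a b).toNat : ℝ) = (Yint W n ε i a b : ℝ) := by
      exact_mod_cast Int.toNat_of_nonneg (hYposZ i a b)
    rw [h1]
    field_simp
  · intro i a b
    have h := le_of_lt (Yint_close W n ε i a b)
    have heq : W.e i a b - (Yint W n ε i a b : ℝ) / n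
        = ((n : ℝ) * W.e i a b - (Yint W n ε i a b : ℝ)) / n := by
      field_simp
    rw [heq, abs_div, abs_of_pos hn']
    rw [abs_sub_comm] at h
    gcongr

/-- the uniform weight -/
def unif (r : ℕ) (A : Type*) [Fintype A] [Nonempty A] : Weight r A where
  v := fun _ => 1 / (Fintype.card A : ℝ)
  e := fun _ _ _ => 1 / ((Fintype.card A : ℝ))^2
  v_nonneg := fun _ => by positivity
  v_le_one := fun _ => by
    have : (1:ℝ) ≤ (Fintype.card A : ℝ) := by exact_mod_cast Fintype.card_pos
    rw [div_le_one (by linarith)]; linarith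
  e_nonneg := fun _ _ _ => by positivity
  e_le_one := fun _ _ _ => by
    have : (1:ℝ) ≤ (Fintype.card A : ℝ) := by exact_mod_cast Fintype.card_pos
    rw [div_le_one (by nlinarith)]; nlinarith
  row := fun i a => by
    have hc : (0:ℝ) < (Fintype.card A : ℝ) := by exact_mod_cast Fintype.card_pos
    rw [Finset.sum_const, Finset.card_univ, nsmul_eq_mul]
    field_simp
  col := fun i a => by
    have hc : (0:ℝ) < (Fintype.card A : ℝ) := by exact_mod_cast Fintype.card_pos
    rw [Finset.sum_const, Finset.card_univ, nsmul_eq_mul]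
    field_simp
  total := by
    have hc : (0:ℝ) < (Fintype.card A : ℝ) := by exact_mod_cast Fintype.card_pos
    rw [Finset.sum_const, Finset.card_univ, nsmul_eq_mul]
    field_simp

/-- convex combination of weights -/
def mix (W U : Weight r A) (θ : ℝ) (h0 : 0 ≤ θ) (h1 : θ ≤ 1) : Weight r A where
  v := fun a => (1 - θ) * W.v a + θ * U.v a
  e := fun i a b => (1 - θ) * W.e i a b + θ * U.e i a b
  v_nonneg := fun a =>
    add_nonneg (mul_nonneg (by linarith) (W.v_nonneg a)) (mul_nonneg h0 (U.v_nonneg a))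
  v_le_one := fun a => by
    have h2 := mul_nonneg (by linarith : (0:ℝ) ≤ 1 - θ) (sub_nonneg.mpr (W.v_le_one a))
    have h3 := mul_nonneg h0 (sub_nonneg.mpr (U.v_le_one a))
    nlinarith
  e_nonneg := fun i a b =>
    add_nonneg (mul_nonneg (by linarith) (W.e_nonneg i a b)) (mul_nonneg h0 (U.e_nonneg i a b))
  e_le_one := fun i a b => by
    have h2 := mul_nonneg (by linarith : (0:ℝ) ≤ 1 - θ) (sub_nonneg.mpr (W.e_le_one i a b))
    have h3 := mul_nonneg h0 (sub_nonneg.mpr (U.e_le_one i a b))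
    nlinarith
  row := fun i a => by
    rw [Finset.sum_add_distrib, ← Finset.mul_sum, ← Finset.mul_sum, ← W.row, ← U.row]
  col := fun i a => by
    rw [Finset.sum_add_distrib, ← Finset.mul_sum, ← Finset.mul_sum, ← W.col, ← U.col]
  total := by
    rw [Finset.sum_add_distrib, ← Finset.mul_sum, ← Finset.mul_sum, W.total, U.total]; ring

/-- the delta weight at a point -/
def delta (r : ℕ) (A : Type*) [Fintype A] (a0 : A) : Weight r A where
  v := fun a => if a = a0 then 1 else 0
  e := fun _ a b => if a = a0 ∧ b = a0 then 1 else 0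
  v_nonneg := fun a => by split_ifs <;> norm_num
  v_le_one := fun a => by split_ifs <;> norm_num
  e_nonneg := fun i a b => by split_ifs <;> norm_num
  e_le_one := fun i a b => by split_ifs <;> norm_num
  row := fun i a => by simp [ite_and, Finset.sum_ite_eq']
  col := fun i a => by simp [ite_and]
  total := by simp

end WtAux

/-- There is a constant `k > 0` depending only on `r` and `|A|` such that for every weight `W`
and every positive integer `n` there is a weight `W̃` with `nW̃(a,b;i) ∈ ℤ` for all `a b i`
(so `q_{W̃}` is finite and divides `n`) and `d_*(W,W̃) ≤ k/n`. -/
theorem weight_rational_approx {r : ℕ} (hr : 1 ≤ r) {A : Type*} [Fintype A] :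
    ∃ k : ℝ, 0 < k ∧
      ∀ (W : Weight r A) (n : ℕ), 0 < n →
        ∃ Wt : Weight r A,
          (∀ i a b, ∃ z : ℕ, (z : ℝ) = n * Wt.e i a b) ∧ dW W Wt ≤ k / n := by
  classical
  rcases isEmpty_or_nonempty A with hA | hA
  · exact ⟨1, one_pos, fun W n hn => absurd W.total (by simp)⟩
  have hm1 : 1 ≤ Fintype.card A := Fintype.card_pos
  set m := Fintype.card A with hm
  have hmR : (1:ℝ) ≤ (m:ℝ) := by exact_mod_cast hm1
  have hrR : (1:ℝ) ≤ (r:ℝ) := by exact_mod_cast hr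
  refine ⟨5 * r * (m:ℝ)^4 + 5, by positivity, fun W n hn => ?_⟩
  have hn' : (0:ℝ) < n := by exact_mod_cast hn
  by_cases hsm : n ≤ 2 * m^2
  · -- small n : use the delta weight
    set a0 := Classical.arbitrary A
    refine ⟨WtAux.delta r A a0, ?_, ?_⟩
    · intro i a b
      by_cases h : a = a0 ∧ b = a0
      · exact ⟨n, by simp [WtAux.delta, h]⟩
      · exact ⟨0, by simp [WtAux.delta, h]⟩
    · have hb : dW W (WtAux.delta r A a0) ≤ 2 * r := by
        unfold dW
        have hib : ∀ i : Fin r, ∑ a : A, ∑ b : A,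
            |W.e i a b - (WtAux.delta r A a0).e i a b| ≤ 2 := by
          intro i
          calc ∑ a : A, ∑ b : A, |W.e i a b - (WtAux.delta r A a0).e i a b|
              ≤ ∑ a : A, ∑ b : A, (W.e i a b + (WtAux.delta r A a0).e i a b) := by
                refine Finset.sum_le_sum fun a _ => Finset.sum_le_sum fun b _ => ?_
                have h1 := W.e_nonneg i a b
                have h2 := W.e_le_one i a b
                have h3 := (WtAux.delta r A a0).e_nonneg i a b
                have h4 := (WtAux.delta r A a0).e_le_one i a b
                exact abs_le.mpr ⟨by linarith, by linarith⟩
            _ = 2 := by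
                rw [Finset.sum_congr rfl fun a _ => Finset.sum_add_distrib]
                rw [Finset.sum_add_distrib, WtAux.sum_sum_e, WtAux.sum_sum_e]
                norm_num
        calc ∑ i : Fin r, ∑ a : A, ∑ b : A, |W.e i a b - (WtAux.delta r A a0).e i a b|
            ≤ ∑ _i : Fin r, (2:ℝ) := Finset.sum_le_sum fun i _ => hib i
          _ = 2 * r := by simp [Finset.sum_const, Finset.card_univ, mul_comm]
      refine hb.trans ?_
      rw [le_div_iff₀ hn']
      have hnm : (n:ℝ) ≤ 2 * (m:ℝ)^2 := by exact_mod_cast hsm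
      have hm2 : (1:ℝ) ≤ (m:ℝ)^2 := by nlinarith
      have hm4 : (m:ℝ)^2 ≤ (m:ℝ)^4 := by nlinarith [sq_nonneg ((m:ℝ)^2 - 1)]
      nlinarith [mul_nonneg (by linarith : (0:ℝ) ≤ (r:ℝ))
          (by linarith : (0:ℝ) ≤ (m:ℝ)^4 - (m:ℝ)^2),
        mul_le_mul_of_nonneg_left hnm (by linarith : (0:ℝ) ≤ 2 * (r:ℝ)),
        mul_le_mul_of_nonneg_left hm4 (by linarith : (0:ℝ) ≤ 4 * (r:ℝ))]
  · -- large n : mix with the uniform weight and round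
    push_neg at hsm
    have hnm : 2 * (m:ℝ)^2 < (n:ℝ) := by exact_mod_cast hsm
    set θ : ℝ := 2 * (m:ℝ)^2 / n with hθ
    have h0 : 0 ≤ θ := by positivity
    have h1 : θ ≤ 1 := by rw [div_le_one hn']; linarith
    set U := WtAux.unif r A with hU
    set W' := WtAux.mix W U θ h0 h1 with hW'def
    have hUe : ∀ i a b, U.e i a b = 1 / (m:ℝ)^2 := fun i a b => rfl
    have hW'e : ∀ i a b, W'.e i a b = (1 - θ) * W.e i a b + θ * (1 / (m:ℝ)^2) := by
      intro i a b; rfl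
    have hkey : (n:ℝ) * (θ * (1 / (m:ℝ)^2)) = 2 := by
      rw [hθ]; field_simp
    have hW' : ∀ i a b, 2 ≤ (n:ℝ) * W'.e i a b := by
      intro i a b
      rw [hW'e]
      have h2 := mul_nonneg (mul_nonneg hn'.le (by linarith : (0:ℝ) ≤ 1 - θ)) (W.e_nonneg i a b)
      nlinarith [hkey]
    obtain ⟨Wt, hint, hcl⟩ := WtAux.exists_round W' n hn hW'
    refine ⟨Wt, hint, ?_⟩
    have hpt : ∀ i a b, |W.e i a b - Wt.e i a b| ≤ θ + 2 / n := by
      intro i a b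
      have t1 : |W.e i a b - W'.e i a b| ≤ θ := by
        have : W.e i a b - W'.e i a b = θ * (W.e i a b - 1 / (m:ℝ)^2) := by
          rw [hW'e]; ring
        rw [this, abs_mul, abs_of_nonneg h0]
        have hm2 : (0:ℝ) ≤ 1 / (m:ℝ)^2 := by positivity
        have hm3 : 1 / (m:ℝ)^2 ≤ 1 := by
          rw [div_le_one (by positivity)]; nlinarith
        have h1' := W.e_nonneg i a b
        have h2' := W.e_le_one i a b
        have : |W.e i a b - 1 / (m:ℝ)^2| ≤ 1 := abs_le.mpr ⟨by linarith, by linarith⟩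
        nlinarith
      have t2 := hcl i a b
      calc |W.e i a b - Wt.e i a b|
          ≤ |W.e i a b - W'.e i a b| + |W'.e i a b - Wt.e i a b| := by
            have := abs_sub_le (W.e i a b) (W'.e i a b) (Wt.e i a b)
            linarith
        _ ≤ θ + 2 / n := by linarith
    have hsum : dW W Wt ≤ (r:ℝ) * ((m:ℝ) * ((m:ℝ) * (θ + 2 / n))) := by
      unfold dW
      calc ∑ i : Fin r, ∑ a : A, ∑ b : A, |W.e i a b - Wt.e i a b|
          ≤ ∑ _i : Fin r, ∑ _a : A, ∑ _b : A, (θ + 2 / n) := by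
            refine Finset.sum_le_sum fun i _ => Finset.sum_le_sum fun a _ =>
              Finset.sum_le_sum fun b _ => hpt i a b
        _ = (r:ℝ) * ((m:ℝ) * ((m:ℝ) * (θ + 2 / n))) := by
            simp only [Finset.sum_const, Finset.card_univ, nsmul_eq_mul, Fintype.card_fin, ← hm]
    refine hsum.trans ?_
    have heq : (r:ℝ) * ((m:ℝ) * ((m:ℝ) * (θ + 2 / n)))
        = ((r:ℝ) * (m:ℝ)^2 * (2 * (m:ℝ)^2 + 2)) / n := by
      rw [hθ]; field_simp
    rw [heq]
    refine (div_le_div_iff_of_pos_right hn').mpr ?_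
    have hm2 : (1:ℝ) ≤ (m:ℝ)^2 := by nlinarith
    have hm4 : (m:ℝ)^2 ≤ (m:ℝ)^4 := by nlinarith [sq_nonneg ((m:ℝ)^2 - 1)]
    have e1 : (r:ℝ) * (m:ℝ)^2 * (2 * (m:ℝ)^2 + 2)
        = 2*(r:ℝ)*(m:ℝ)^4 + 2*(r:ℝ)*(m:ℝ)^2 := by ring
    rw [e1]
    have h4 : 2*(r:ℝ)*(m:ℝ)^2 ≤ 2*(r:ℝ)*(m:ℝ)^4 := by
      have := mul_le_mul_of_nonneg_left hm4 (by linarith : (0:ℝ) ≤ 2 * (r:ℝ))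
      linarith
    have h5 : (0:ℝ) ≤ (r:ℝ)*(m:ℝ)^4 := by positivity
    linarith only [h4, h5]
end
end

section
/- Let G = ⟨s_1,…,s_r⟩ be the free group of rank r ≥ 1, let T be a measure-preserving action of G on a standard probability space (X,μ), let φ : X → A be an observable with A finite, and let B = B(e,m) for some m ≥ 0. There exist constants C, k > 0 depending only on |A| and |B| such that for every ε with 0 < ε < 1/(4|B|), every n, every homomorphism σ : G → Sym(n), and every map ω : {1,…,n} → A, the number of maps ψ : {1,…,n} → A^B with d^*_σ(φ^B, ψ) ≤ ε and π_e∘ψ = ω is at most C·exp(nkε + nH(2|B|ε)), where H(x) := −x log x − (1−x) log(1−x). -/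
open MeasureTheory Real Filter

noncomputable section

/-- The Shannon entropy `H(φ)` of an observable `φ : X → A` with respect to `μ`. -/
def obsEntropy {X A : Type*} [MeasurableSpace X] (μ : Measure X) (φ : X → A) : ℝ :=
  ∑' a : A, Real.negMulLog ((μ (φ ⁻¹' {a})).toReal)

/-- The joint observable `φ^H : X → A^H`, `φ^H(x) = (φ(T_h x))_{h ∈ H}`. -/
def obsJoin {G X A : Type*} (T : G → X → X) (φ : X → A) (H : Set G) : X → (H → A) :=
  fun x h => φ (T (h : G) x)

/-- `F(T,φ) = (1-2r) H(φ) + ∑_{i=1}^r H(φ ∨ T_{s_i}φ)` for the free group of rank `r`,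
with free generators `s_i = FreeGroup.of i`. -/
def FF (r : ℕ) {X A : Type*} [MeasurableSpace X] (μ : Measure X)
    (T : FreeGroup (Fin r) → X → X) (φ : X → A) : ℝ :=
  (1 - 2 * (r : ℝ)) * obsEntropy μ φ +
    ∑ i : Fin r, obsEntropy μ (fun x => (φ x, φ (T (FreeGroup.of i) x)))

/-- The ball `B(e,n)` of radius `n` about the identity of the free group of rank `r`
in the word metric of the free generating set. -/
def ball (r n : ℕ) : Set (FreeGroup (Fin r)) :=
  {g | (FreeGroup.toWord g).length ≤ n}

/-- The `f`-invariant `f(T,φ) = inf_n F(T, φ^{B(e,n)})`. -/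
def fInv (r : ℕ) {X A : Type*} [MeasurableSpace X] (μ : Measure X)
    (T : FreeGroup (Fin r) → X → X) (φ : X → A) : ℝ :=
  ⨅ n : ℕ, FF r μ T (obsJoin T φ (ball r n))

/-- `ψ^H : {1,…,n} → A^H`, `ψ^H(j) = (ψ(σ(h)j))_{h ∈ H}`. -/
def permJoin {G A : Type*} [Group G] {n : ℕ} (σ : G →* Equiv.Perm (Fin n))
    (ψ : Fin n → A) (H : Set G) : Fin n → (H → A) :=
  fun j h => ψ (σ (h : G) j)

/-- `d^H_σ(φ,ψ)`: the `ℓ¹`-distance between the distribution of `φ^H` under `μ`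
and the distribution of `ψ^H` under the uniform measure on `{1,…,n}`. -/
def dH {G X A : Type*} [Group G] [MeasurableSpace X] (μ : Measure X) {n : ℕ}
    (T : G → X → X) (φ : X → A) (σ : G →* Equiv.Perm (Fin n)) (ψ : Fin n → A)
    (H : Set G) : ℝ :=
  ∑' w : H → A,
    |(μ (obsJoin T φ H ⁻¹' {w})).toReal -
      (Nat.card {j : Fin n // permJoin σ ψ H j = w} : ℝ) / n|

/-- `d^*_σ(φ,ψ) = ∑_{i=1}^r d^{{e,s_i}}_σ(φ,ψ)`. -/
def dStar (r : ℕ) {X A : Type*} [MeasurableSpace X] (μ : Measure X) {n : ℕ}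
    (T : FreeGroup (Fin r) → X → X) (φ : X → A)
    (σ : FreeGroup (Fin r) →* Equiv.Perm (Fin n)) (ψ : Fin n → A) : ℝ :=
  ∑ i : Fin r, dH μ T φ σ ψ {1, FreeGroup.of i}

/-- The expected number, over a uniformly random homomorphism
`σ : FreeGroup (Fin r) →* Sym(n)` (equivalently, over a uniformly random `r`-tuple of
permutations), of maps `ψ : {1,…,n} → A` with `d^H_σ(φ,ψ) ≤ ε`. -/
def Ecount (r : ℕ) {X A : Type*} [MeasurableSpace X] (μ : Measure X)
    (T : FreeGroup (Fin r) → X → X) (φ : X → A) (H : Set (FreeGroup (Fin r)))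
    (ε : ℝ) (n : ℕ) : ℝ :=
  (∑ σs : Fin r → Equiv.Perm (Fin n),
      (Nat.card {ψ : Fin n → A // dH μ T φ (FreeGroup.lift σs) ψ H ≤ ε} : ℝ)) /
    (n.factorial : ℝ) ^ r

/-- `h(Σ,T,φ)` where `Σ = {μ_n}` and `μ_n` is the uniform probability measure on the set of
homomorphisms `FreeGroup (Fin r) →* Sym(n)`. -/
def hSigma (r : ℕ) {X A : Type*} [MeasurableSpace X] (μ : Measure X)
    (T : FreeGroup (Fin r) → X → X) (φ : X → A) : ℝ :=
  ⨅ (Hs : Finset (FreeGroup (Fin r))) (ε : ℝ) (_ : 0 < ε),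
    Filter.atTop.limsup fun n : ℕ => Real.log (Ecount r μ T φ (↑Hs) ε n) / n

theorem one_mem_ball (r m : ℕ) : (1 : FreeGroup (Fin r)) ∈ ball r m := by
  simp [ball, FreeGroup.toWord_one]

/-- The binary entropy function `H(x) = −x log x − (1−x) log(1−x)`. -/
def binEnt (x : ℝ) : ℝ := -x * Real.log x - (1 - x) * Real.log (1 - x)

/-! ### Auxiliary material for `card_fiber_le` -/

namespace CardFiberAux

lemma ball_finite (r m : ℕ) : (ball r m).Finite := by
  have h : ball r m ⊆ FreeGroup.toWord ⁻¹' {L : List (Fin r × Bool) | L.length ≤ m} :=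
    fun g hg => hg
  exact (((List.finite_length_le _ m).preimage
    (FreeGroup.toWord_injective.injOn))).subset h

lemma ball_nonempty (r m : ℕ) : (ball r m).Nonempty := ⟨1, one_mem_ball r m⟩

lemma ncard_ball_pos (r m : ℕ) : 0 < ((ball r m).ncard) :=
  (Set.ncard_pos (ball_finite r m)).2 (ball_nonempty r m)

/-- An infix of a reduced word is reduced. -/
lemma reduce_infix {α : Type*} [DecidableEq α] {L₁ L₂ : List (α × Bool)}
    (h : FreeGroup.reduce (L₁ ++ L₂) = L₁ ++ L₂) :
    FreeGroup.reduce L₁ = L₁ ∧ FreeGroup.reduce L₂ = L₂ := by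
  classical
  have h1 : FreeGroup.Red (L₁ ++ L₂) (FreeGroup.reduce L₁ ++ FreeGroup.reduce L₂) :=
    FreeGroup.Red.append_append FreeGroup.reduce.red FreeGroup.reduce.red
  have h2 : FreeGroup.reduce (FreeGroup.reduce L₁ ++ FreeGroup.reduce L₂) = L₁ ++ L₂ := by
    rw [← FreeGroup.reduce.eq_of_red h1, h]
  have h3 : FreeGroup.Red (FreeGroup.reduce L₁ ++ FreeGroup.reduce L₂) (L₁ ++ L₂) := by
    rw [← h2]; exact FreeGroup.reduce.red
  have hsub : List.Sublist (L₁ ++ L₂) (FreeGroup.reduce L₁ ++ FreeGroup.reduce L₂) := h3.sublist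
  have hs1 : List.Sublist (FreeGroup.reduce L₁) L₁ := FreeGroup.Red.sublist FreeGroup.reduce.red
  have hs2 : List.Sublist (FreeGroup.reduce L₂) L₂ := FreeGroup.Red.sublist FreeGroup.reduce.red
  have hlen : (L₁ ++ L₂).length ≤
      (FreeGroup.reduce L₁ ++ FreeGroup.reduce L₂).length := hsub.length_le
  simp only [List.length_append] at hlen
  have hl1 := hs1.length_le
  have hl2 := hs2.length_le
  constructor
  · exact hs1.eq_of_length (by omega)
  · exact hs2.eq_of_length (by omega)

/-- The two-point set `{1, s_i}`. -/
abbrev HS (r : ℕ) (i : Fin r) : Set (FreeGroup (Fin r)) := {1, FreeGroup.of i}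

lemma one_mem_HS {r : ℕ} {i : Fin r} : (1 : FreeGroup (Fin r)) ∈ HS r i :=
  Set.mem_insert _ _

lemma of_mem_HS {r : ℕ} {i : Fin r} : FreeGroup.of i ∈ HS r i :=
  Set.mem_insert_of_mem _ rfl

/-- Consistency of a pattern `w : {1,s_i} → A^B`. -/
def Cons (r m : ℕ) {A : Type*} (i : Fin r) (w : HS r i → (ball r m → A)) : Prop :=
  ∀ (g : FreeGroup (Fin r)) (hg : g ∈ ball r m) (hg' : g * FreeGroup.of i ∈ ball r m),
    w ⟨1, one_mem_HS⟩ ⟨g * FreeGroup.of i, hg'⟩ = w ⟨FreeGroup.of i, of_mem_HS⟩ ⟨g, hg⟩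

lemma preimage_eq_empty_of_not_cons {r m : ℕ} {A : Type*} {X : Type}
    (T : FreeGroup (Fin r) → X → X)
    (hT : ∀ g h x, T (g * h) x = T g (T h x)) (φ : X → A) {i : Fin r}
    {w : HS r i → (ball r m → A)} (hw : ¬ Cons r m i w) :
    obsJoin T (obsJoin T φ (ball r m)) (HS r i) ⁻¹' {w} = ∅ := by
  rw [Set.eq_empty_iff_forall_notMem]
  intro x hx
  apply hw
  have hx' : obsJoin T (obsJoin T φ (ball r m)) (HS r i) x = w := hx
  intro g hg hg'
  rw [← hx']
  show φ (T (g * FreeGroup.of i) (T 1 x)) = φ (T g (T (FreeGroup.of i) x))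
  rw [← hT, ← hT, mul_one]

lemma cons_permJoin {r m n : ℕ} {A : Type*} {σ : FreeGroup (Fin r) →* Equiv.Perm (Fin n)}
    {ψ : Fin n → (ball r m → A)} {i : Fin r} {v : Fin n}
    (h : Cons r m i (permJoin σ ψ (HS r i) v)) (g : FreeGroup (Fin r))
    (hg : g ∈ ball r m) (hg' : g * FreeGroup.of i ∈ ball r m) :
    ψ v ⟨g * FreeGroup.of i, hg'⟩ = ψ (σ (FreeGroup.of i) v) ⟨g, hg⟩ := by
  have h2 := h g hg hg'
  simpa [permJoin, map_one] using h2

lemma reconstruct {r m n : ℕ} {A : Type*} {σ : FreeGroup (Fin r) →* Equiv.Perm (Fin n)}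
    {ψ : Fin n → (ball r m → A)} {ω : Fin n → A}
    (hω : ∀ j', ψ j' ⟨1, one_mem_ball r m⟩ = ω j') {j : Fin n}
    (hj : ∀ g ∈ ball r m, ∀ i : Fin r, Cons r m i (permJoin σ ψ (HS r i) (σ g j))) :
    ∀ (l : ℕ) (u c : FreeGroup (Fin r)), u.toWord.length = l →
      FreeGroup.reduce (u.toWord ++ c.toWord) = u.toWord ++ c.toWord →
      (u.toWord ++ c.toWord).length ≤ m →
      ∀ (hu : u ∈ ball r m), ψ (σ c j) ⟨u, hu⟩ = ω (σ (u * c) j) := by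
  intro l
  induction l using Nat.strong_induction_on with
  | _ l ih =>
    intro u c hl hred hlen hu
    rcases eq_or_ne u.toWord [] with hnil | hnil
    · have hu1 : u = 1 := FreeGroup.toWord_eq_nil_iff.mp hnil
      subst hu1
      rw [one_mul]
      exact hω (σ c j)
    · classical
      have hLL : u.toWord.dropLast ++ [u.toWord.getLast hnil] = u.toWord :=
        List.dropLast_append_getLast hnil
      rcases hle : u.toWord.getLast hnil with ⟨i, e⟩
      rw [hle] at hLL
      have hsplit : u.toWord ++ c.toWord = u.toWord.dropLast ++ ((i, e) :: c.toWord) := by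
        rw [← hLL]; simp
      have hinfix := reduce_infix (L₁ := u.toWord.dropLast) (L₂ := (i, e) :: c.toWord)
        (by rw [← hsplit]; exact hred)
      have htwu' : (FreeGroup.mk u.toWord.dropLast).toWord = u.toWord.dropLast := by
        rw [FreeGroup.toWord_mk, hinfix.1]
      have htwc' : (FreeGroup.mk ((i, e) :: c.toWord)).toWord = (i, e) :: c.toWord := by
        rw [FreeGroup.toWord_mk, hinfix.2]
      have hlen' : (FreeGroup.mk u.toWord.dropLast).toWord
            ++ (FreeGroup.mk ((i, e) :: c.toWord)).toWord = u.toWord ++ c.toWord := by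
        rw [htwu', htwc', hsplit]
      have huu : FreeGroup.mk u.toWord.dropLast * FreeGroup.mk [(i, e)] = u := by
        rw [FreeGroup.mul_mk, hLL, FreeGroup.mk_toWord]
      have hcc : FreeGroup.mk [(i, e)] * c = FreeGroup.mk ((i, e) :: c.toWord) := by
        conv_lhs => rw [← FreeGroup.mk_toWord (x := c)]
        rw [FreeGroup.mul_mk]
        rfl
      have hlen0 : u.toWord.length + c.toWord.length ≤ m := by
        simpa using hlen
      have hpos : 0 < u.toWord.length := List.length_pos_iff.2 hnil
      have hdl : u.toWord.dropLast.length = u.toWord.length - 1 := List.length_dropLast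
      have hu'mem : FreeGroup.mk u.toWord.dropLast ∈ ball r m := by
        show (FreeGroup.mk u.toWord.dropLast).toWord.length ≤ m
        rw [htwu']; omega
      have hc'mem : FreeGroup.mk ((i, e) :: c.toWord) ∈ ball r m := by
        show (FreeGroup.mk ((i, e) :: c.toWord)).toWord.length ≤ m
        rw [htwc']
        simp only [List.length_cons]
        omega
      have hcmem : c ∈ ball r m := by
        show c.toWord.length ≤ m; omega
      have hIH := ih u.toWord.dropLast.length (by omega)
        (FreeGroup.mk u.toWord.dropLast) (FreeGroup.mk ((i, e) :: c.toWord))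
        (by rw [htwu']) (by rw [hlen']; exact hred) (by rw [hlen']; exact hlen) hu'mem
      generalize hg1 : FreeGroup.mk u.toWord.dropLast = u' at htwu' huu hu'mem hIH
      generalize hg2 : FreeGroup.mk ((i, e) :: c.toWord) = c' at htwc' hcc hc'mem hIH
      cases e with
      | true =>
        have hux : u' * FreeGroup.of i = u := huu
        have hcons := hj c hcmem i
        have humem2 : u' * FreeGroup.of i ∈ ball r m := by rw [hux]; exact hu
        have hstep := cons_permJoin hcons u' hu'mem humem2
        have hsub : (⟨u' * FreeGroup.of i, humem2⟩ :
            ball r m) = ⟨u, hu⟩ := Subtype.ext hux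
        rw [hsub] at hstep
        have hσ : σ (FreeGroup.of i) (σ c j) = σ c' j := by
          rw [← hcc, map_mul]; rfl
        rw [hσ] at hstep
        rw [hstep, hIH]
        have huc : u' * c' = u * c := by rw [← hcc, ← mul_assoc, huu]
        rw [huc]
      | false =>
        have hofi : FreeGroup.mk [(i, false)] = (FreeGroup.of i)⁻¹ := by
          rw [FreeGroup.of, FreeGroup.inv_mk]; rfl
        have hux : u * FreeGroup.of i = u' := by
          rw [← huu, hofi, mul_assoc, inv_mul_cancel, mul_one]
        have hci : FreeGroup.of i * c' = c := by
          rw [← hcc, hofi, ← mul_assoc, mul_inv_cancel, one_mul]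
        have hcons := hj c' hc'mem i
        have humem2 : u * FreeGroup.of i ∈ ball r m := by rw [hux]; exact hu'mem
        have hstep := cons_permJoin hcons u hu humem2
        have hsub : (⟨u * FreeGroup.of i, humem2⟩ : ball r m)
            = ⟨u', hu'mem⟩ := Subtype.ext hux
        rw [hsub] at hstep
        have hσ : σ (FreeGroup.of i) (σ c' j) = σ c j := by
          rw [← hci, map_mul]; rfl
        rw [hσ] at hstep
        rw [← hstep, hIH]
        have huc : u' * c' = u * c := by rw [← hcc, ← mul_assoc, huu]
        rw [huc]

lemma card_incons_le {r m n : ℕ} {A : Type*} [Fintype A] {X : Type} [MeasurableSpace X]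
    (μ : Measure X) (T : FreeGroup (Fin r) → X → X)
    (hT : ∀ g h x, T (g * h) x = T g (T h x)) (φ : X → A)
    (σ : FreeGroup (Fin r) →* Equiv.Perm (Fin n)) (ψ : Fin n → (ball r m → A)) (i : Fin r) :
    (Nat.card {v : Fin n // ¬ Cons r m i (permJoin σ ψ (HS r i) v)} : ℝ) ≤
      n * dH μ T (obsJoin T φ (ball r m)) σ ψ (HS r i) := by
  classical
  haveI : Finite (HS r i) := (Set.Finite.insert _ (Set.finite_singleton _)).to_subtype
  haveI : Finite (ball r m) := (ball_finite r m).to_subtype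
  haveI : Fintype (HS r i) := Fintype.ofFinite _
  haveI : Fintype (ball r m) := Fintype.ofFinite _
  set F := permJoin σ ψ (HS r i) with hF
  have hdH : dH μ T (obsJoin T φ (ball r m)) σ ψ (HS r i)
      = ∑ w : (HS r i) → (ball r m → A),
          |(μ (obsJoin T (obsJoin T φ (ball r m)) (HS r i) ⁻¹' {w})).toReal -
            (Nat.card {v : Fin n // F v = w} : ℝ) / n| := by
    rw [dH, tsum_fintype]
  rcases Nat.eq_zero_or_pos n with hn | hn
  · subst hn
    haveI : IsEmpty {v : Fin 0 // ¬ Cons r m i (F v)} := ⟨fun v => v.1.elim0⟩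
    simp [Nat.card_of_isEmpty]
  have hn' : (0:ℝ) < n := by exact_mod_cast hn
  have hcount : (Nat.card {v : Fin n // ¬ Cons r m i (F v)} : ℕ)
      = (Finset.univ.filter fun v => ¬ Cons r m i (F v)).card := by
    rw [Nat.card_eq_fintype_card, Fintype.card_subtype]
  have hfib : (Finset.univ.filter fun v => ¬ Cons r m i (F v)).card
      ≤ ∑ w ∈ Finset.univ.filter (fun w => ¬ Cons r m i w),
          (Finset.univ.filter fun v => F v = w).card := by
    rw [Finset.card_eq_sum_card_fiberwise (f := F)
      (t := Finset.univ.filter (fun w => ¬ Cons r m i w))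
      (fun v hv => by
        simp only [Finset.mem_coe, Finset.mem_filter, Finset.mem_univ, true_and] at hv ⊢
        exact hv)]
    exact Finset.sum_le_sum fun w _ =>
      Finset.card_le_card (Finset.filter_subset_filter _ (Finset.subset_univ _))
  have hterm : ∀ w ∈ Finset.univ.filter (fun w => ¬ Cons r m i w),
      ((Finset.univ.filter fun v => F v = w).card : ℝ)
        ≤ n * |(μ (obsJoin T (obsJoin T φ (ball r m)) (HS r i) ⁻¹' {w})).toReal -
            (Nat.card {v : Fin n // F v = w} : ℝ) / n| := by
    intro w hw
    simp only [Finset.mem_filter, Finset.mem_univ, true_and] at hw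
    have hμ : (μ (obsJoin T (obsJoin T φ (ball r m)) (HS r i) ⁻¹' {w})).toReal = 0 := by
      rw [preimage_eq_empty_of_not_cons T hT φ hw]
      simp
    have hcard : (Nat.card {v : Fin n // F v = w} : ℝ)
        = ((Finset.univ.filter fun v => F v = w).card : ℝ) := by
      rw [Nat.card_eq_fintype_card, Fintype.card_subtype]
    rw [hμ, zero_sub, abs_neg, abs_div, abs_of_nonneg (by positivity : (0:ℝ) ≤ (Nat.card {v : Fin n // F v = w} : ℝ)), abs_of_nonneg hn'.le, hcard]
    rw [mul_div_cancel₀ _ hn'.ne']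
  calc (Nat.card {v : Fin n // ¬ Cons r m i (F v)} : ℝ)
      ≤ ∑ w ∈ Finset.univ.filter (fun w => ¬ Cons r m i w),
          ((Finset.univ.filter fun v => F v = w).card : ℝ) := by
        rw [hcount]
        exact_mod_cast hfib
    _ ≤ ∑ w ∈ Finset.univ.filter (fun w => ¬ Cons r m i w),
          n * |(μ (obsJoin T (obsJoin T φ (ball r m)) (HS r i) ⁻¹' {w})).toReal -
            (Nat.card {v : Fin n // F v = w} : ℝ) / n| :=
        Finset.sum_le_sum hterm
    _ ≤ ∑ w : (HS r i) → (ball r m → A),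
          n * |(μ (obsJoin T (obsJoin T φ (ball r m)) (HS r i) ⁻¹' {w})).toReal -
            (Nat.card {v : Fin n // F v = w} : ℝ) / n| :=
        Finset.sum_le_sum_of_subset_of_nonneg (Finset.filter_subset _ _)
          (fun w _ _ => by positivity)
    _ = n * dH μ T (obsJoin T φ (ball r m)) σ ψ (HS r i) := by
        rw [hdH, Finset.mul_sum]

/-- `j` is a good vertex for `ψ`. -/
def GoodV {r m n : ℕ} {A : Type*} (σ : FreeGroup (Fin r) →* Equiv.Perm (Fin n))
    (ψ : Fin n → (ball r m → A)) (j : Fin n) : Prop :=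
  ∀ g ∈ ball r m, ∀ i : Fin r, Cons r m i (permJoin σ ψ (HS r i) (σ g j))

lemma card_bad_le {r m n : ℕ} {A : Type*} (σ : FreeGroup (Fin r) →* Equiv.Perm (Fin n))
    (ψ : Fin n → (ball r m → A)) :
    (Nat.card {j : Fin n // ¬ GoodV σ ψ j} : ℝ) ≤
      ((ball r m).ncard : ℝ) * ∑ i : Fin r,
        (Nat.card {v : Fin n // ¬ Cons r m i (permJoin σ ψ (HS r i) v)} : ℝ) := by
  classical
  haveI : Finite (ball r m) := (ball_finite r m).to_subtype
  have hex : ∀ j : {j : Fin n // ¬ GoodV σ ψ j}, ∃ g : ball r m, ∃ i : Fin r,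
      ¬ Cons r m i (permJoin σ ψ (HS r i) (σ g.1 j.1)) := by
    rintro ⟨j, hj⟩
    by_contra h
    push_neg at h
    exact hj fun g hg i => h ⟨g, hg⟩ i
  choose fg fi hf using hex
  let P : Fin r → Fin n → Prop := fun i v => ¬ Cons r m i (permJoin σ ψ (HS r i) v)
  let F : {j : Fin n // ¬ GoodV σ ψ j} →
      (ball r m) × {p : Fin r × Fin n // P p.1 p.2} :=
    fun j => ⟨fg j, ⟨(fi j, σ (fg j).1 j.1), hf j⟩⟩
  have hinj : Function.Injective F := by
    intro a b hab
    have h1 : fg a = fg b := congrArg Prod.fst hab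
    have h2 : (⟨(fi a, σ (fg a).1 a.1), hf a⟩ : {p : Fin r × Fin n // P p.1 p.2})
        = ⟨(fi b, σ (fg b).1 b.1), hf b⟩ := congrArg Prod.snd hab
    have h3 : σ (fg a).1 a.1 = σ (fg b).1 b.1 :=
      congrArg (fun z => z.1.2) h2
    rw [← h1] at h3
    exact Subtype.ext ((σ (fg a).1).injective h3)
  have hle : Nat.card {j : Fin n // ¬ GoodV σ ψ j} ≤
      Nat.card ((ball r m) × {p : Fin r × Fin n // P p.1 p.2}) :=
    Nat.card_le_card_of_injective F hinj
  have hprod : Nat.card ((ball r m) × {p : Fin r × Fin n // P p.1 p.2})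
      = (ball r m).ncard * Nat.card {p : Fin r × Fin n // P p.1 p.2} := by
    rw [Nat.card_prod, Nat.card_coe_set_eq]
  have hsig : Nat.card {p : Fin r × Fin n // P p.1 p.2}
      = ∑ i : Fin r, Nat.card {v : Fin n // P i v} := by
    rw [Nat.card_congr (Equiv.subtypeProdEquivSigmaSubtype P),
      Nat.card_eq_fintype_card, Fintype.card_sigma]
    exact Finset.sum_congr rfl fun i _ => (Nat.card_eq_fintype_card).symm
  calc (Nat.card {j : Fin n // ¬ GoodV σ ψ j} : ℝ)
      ≤ (Nat.card ((ball r m) × {p : Fin r × Fin n // P p.1 p.2}) : ℝ) := by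
        exact_mod_cast hle
    _ = ((ball r m).ncard : ℝ) * ∑ i : Fin r, (Nat.card {v : Fin n // P i v} : ℝ) := by
        rw [hprod, hsig]
        push_cast
        ring
    _ = _ := rfl

lemma sum_choose_le_exp (n t : ℕ) (δ : ℝ) (hδ0 : 0 < δ) (hδ : δ ≤ 1/2)
    (ht : (t : ℝ) ≤ δ * n) :
    (∑ d ∈ Finset.range (t + 1), (n.choose d : ℝ)) ≤ Real.exp (n * binEnt δ) := by
  have hδ1 : δ < 1 := lt_of_le_of_lt hδ (by norm_num)
  have h1δ : 0 < 1 - δ := by linarith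
  set lam := δ / (1 - δ) with hlam
  have hlam0 : 0 < lam := div_pos hδ0 h1δ
  have hlam1 : lam ≤ 1 := by rw [hlam, div_le_one h1δ]; linarith
  have key : lam ^ t * ∑ d ∈ Finset.range (t+1), (n.choose d : ℝ) ≤ (1 + lam) ^ n := by
    calc lam ^ t * ∑ d ∈ Finset.range (t+1), (n.choose d : ℝ)
        = ∑ d ∈ Finset.range (t+1), lam ^ t * (n.choose d : ℝ) := Finset.mul_sum _ _ _
      _ ≤ ∑ d ∈ Finset.range (t+1), lam ^ d * (n.choose d : ℝ) := by
          refine Finset.sum_le_sum fun d hd => ?_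
          have hdt : d ≤ t := by
            have := Finset.mem_range.mp hd; omega
          exact mul_le_mul_of_nonneg_right
            (pow_le_pow_of_le_one hlam0.le hlam1 hdt) (by positivity)
      _ ≤ ∑ d ∈ Finset.range (max (t+1) (n+1)), lam ^ d * (n.choose d : ℝ) :=
          Finset.sum_le_sum_of_subset_of_nonneg
            (Finset.range_subset_range.2 (le_max_left _ _)) (fun i _ _ => by positivity)
      _ = ∑ d ∈ Finset.range (n+1), lam ^ d * (n.choose d : ℝ) := by
          refine (Finset.sum_subset (Finset.range_subset_range.2 (le_max_right _ _))
            (fun x hx hnx => ?_)).symm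
          have hxn : n < x := by
            simp only [Finset.mem_range] at hx hnx; omega
          simp [Nat.choose_eq_zero_of_lt hxn]
      _ = (lam + 1) ^ n := by
          rw [add_pow]
          exact Finset.sum_congr rfl fun k _ => by rw [one_pow, mul_one]
      _ = (1 + lam) ^ n := by rw [add_comm]
  have hsum_le : (∑ d ∈ Finset.range (t+1), (n.choose d : ℝ)) ≤ (1 + lam) ^ n / lam ^ t := by
    rw [le_div_iff₀ (pow_pos hlam0 t)]
    calc (∑ d ∈ Finset.range (t+1), (n.choose d : ℝ)) * lam ^ t
        = lam ^ t * ∑ d ∈ Finset.range (t+1), (n.choose d : ℝ) := by ring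
      _ ≤ (1 + lam) ^ n := key
  refine hsum_le.trans ?_
  have e1 : (1 + lam) ^ n = Real.exp (n * Real.log (1 + lam)) := by
    rw [← Real.log_pow, Real.exp_log (by positivity)]
  have e2 : lam ^ t = Real.exp (t * Real.log lam) := by
    rw [← Real.log_pow, Real.exp_log (by positivity)]
  rw [e1, e2, ← Real.exp_sub]
  apply Real.exp_le_exp.2
  have hloglam : Real.log lam = Real.log δ - Real.log (1 - δ) :=
    Real.log_div hδ0.ne' h1δ.ne'
  have hlog1lam : Real.log (1 + lam) = - Real.log (1 - δ) := by
    have h : 1 + lam = (1 - δ)⁻¹ := by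
      rw [hlam]; field_simp; ring
    rw [h, Real.log_inv]
  have hlamneg : Real.log lam ≤ 0 := Real.log_nonpos hlam0.le hlam1
  have h2 : -((t:ℝ) * Real.log lam) ≤ -(δ * n * Real.log lam) := by
    nlinarith [ht, hlamneg]
  calc (n:ℝ) * Real.log (1 + lam) - t * Real.log lam
      ≤ n * Real.log (1 + lam) - δ * n * Real.log lam := by linarith
    _ = n * binEnt δ := by
        rw [hlog1lam, hloglam, binEnt]; ring

end CardFiberAux

/-- Let `B = B(e,m)`. There are constants `C, k > 0` depending only on `|A|` and `|B|` such
that for every `ε` with `0 < ε < 1/(4|B|)`, every probability space `(X,μ)`, every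
measure-preserving action `T`, every finite observable `φ : X → A`, every `n`, every
homomorphism `σ : G →* Sym(n)` and every `ω : {1,…,n} → A`, the number of maps
`ψ : {1,…,n} → A^B` with `d^*_σ(φ^B,ψ) ≤ ε` and `π_e ∘ ψ = ω` is at most
`C exp(nkε + nH(2|B|ε))`. -/
theorem card_fiber_le {r : ℕ} (hr : 1 ≤ r)
    {A : Type*} [Fintype A] [MeasurableSpace A] [MeasurableSingletonClass A] (m : ℕ) :
    ∃ C k : ℝ, 0 < C ∧ 0 < k ∧
      ∀ (X : Type) [MeasurableSpace X] (μ : Measure X) [IsProbabilityMeasure μ]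
        (T : FreeGroup (Fin r) → X → X),
        (∀ g, MeasurePreserving (T g) μ μ) →
        (∀ g h x, T (g * h) x = T g (T h x)) →
        ∀ (φ : X → A), Measurable φ →
        ∀ (ε : ℝ), 0 < ε → ε < 1 / (4 * ((ball r m).ncard : ℝ)) →
        ∀ (n : ℕ) (σ : FreeGroup (Fin r) →* Equiv.Perm (Fin n)) (ω : Fin n → A),
          (Nat.card {ψ : Fin n → (ball r m → A) //
              dStar r μ T (obsJoin T φ (ball r m)) σ ψ ≤ ε ∧
              (fun j => ψ j ⟨1, one_mem_ball r m⟩) = ω} : ℝ) ≤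
            C * Real.exp (n * k * ε + n * binEnt (2 * ((ball r m).ncard : ℝ) * ε)) := by
  classical
  haveI : Finite (ball r m) := (CardFiberAux.ball_finite r m).to_subtype
  haveI : Fintype (ball r m) := Fintype.ofFinite _
  set M : ℕ := Fintype.card ((ball r m) → A) with hMdef
  have hlogM : 0 ≤ Real.log (M + 1) := Real.log_nonneg (by push_cast; linarith [(Nat.cast_nonneg M : (0:ℝ) ≤ (M:ℝ))])
  have hb : 0 < (ball r m).ncard := CardFiberAux.ncard_ball_pos r m
  have hbR : (0:ℝ) < ((ball r m).ncard : ℝ) := by exact_mod_cast hb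
  refine ⟨1, 2 * ((ball r m).ncard : ℝ) * Real.log (M + 1) + 1, one_pos, ?_, ?_⟩
  · nlinarith [hlogM, hbR]
  intro X _ μ _ T hmp hact φ hφ ε hε0 hε1 n σ ω
  set δ : ℝ := 2 * ((ball r m).ncard : ℝ) * ε with hδdef
  have hδ0 : 0 < δ := by
    rw [hδdef]; nlinarith
  have hδhalf : δ ≤ 1/2 := by
    have h4b : (0:ℝ) < 4 * ((ball r m).ncard : ℝ) := by linarith
    have h5 := (lt_div_iff₀ h4b).mp hε1
    rw [hδdef]; nlinarith
  set t : ℕ := ⌊δ * n⌋₊ with htdef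
  have htle : (t:ℝ) ≤ δ * n := Nat.floor_le (by positivity)
  set badF : (Fin n → (ball r m → A)) → Finset (Fin n) :=
    fun ψ => Finset.univ.filter (fun j => ¬ CardFiberAux.GoodV σ ψ j) with hbadF
  -- bad set is small
  have hbad : ∀ ψ : Fin n → (ball r m → A),
      dStar r μ T (obsJoin T φ (ball r m)) σ ψ ≤ ε → (badF ψ).card ≤ t := by
    intro ψ hψ
    apply Nat.le_floor
    have h1 : ((badF ψ).card : ℝ)
        = (Nat.card {j : Fin n // ¬ CardFiberAux.GoodV σ ψ j} : ℝ) := by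
      rw [hbadF, Nat.card_eq_fintype_card, Fintype.card_subtype]
    have h2 := CardFiberAux.card_bad_le σ ψ
    have h3 : ∑ i : Fin r,
        (Nat.card {v : Fin n // ¬ CardFiberAux.Cons r m i
          (permJoin σ ψ (CardFiberAux.HS r i) v)} : ℝ)
        ≤ n * dStar r μ T (obsJoin T φ (ball r m)) σ ψ := by
      rw [dStar, Finset.mul_sum]
      exact Finset.sum_le_sum fun i _ => CardFiberAux.card_incons_le μ T hact φ σ ψ i
    have h4 : (n:ℝ) * dStar r μ T (obsJoin T φ (ball r m)) σ ψ ≤ n * ε :=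
      mul_le_mul_of_nonneg_left hψ (Nat.cast_nonneg n)
    have h5 : ((badF ψ).card : ℝ) ≤ ((ball r m).ncard : ℝ) * (n * ε) := by
      rw [h1]
      refine h2.trans ?_
      exact mul_le_mul_of_nonneg_left (h3.trans h4) (le_of_lt hbR)
    rw [hδdef]
    nlinarith [h5, hbR, hε0.le, (Nat.cast_nonneg n : (0:ℝ) ≤ (n:ℝ))]
  -- reconstruction on good vertices
  have hrec : ∀ ψ : Fin n → (ball r m → A), (fun j => ψ j ⟨1, one_mem_ball r m⟩) = ω →
      ∀ j : Fin n, CardFiberAux.GoodV σ ψ j →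
        ∀ q : (ball r m), ψ j q = ω (σ q.1 j) := by
    intro ψ hψω j hj q
    obtain ⟨u, hu⟩ := q
    have hω' : ∀ j', ψ j' ⟨1, one_mem_ball r m⟩ = ω j' := fun j' => congrFun hψω j'
    have hr := CardFiberAux.reconstruct hω' hj u.toWord.length u 1 rfl ?_ ?_ hu
    · simpa [map_one, mul_one] using hr
    · rw [FreeGroup.toWord_one, List.append_nil]; exact FreeGroup.reduce_toWord u
    · rw [FreeGroup.toWord_one, List.append_nil]; exact hu
  -- the counting
  set s : Finset (Fin n → (ball r m → A)) := Finset.univ.filter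
    (fun ψ : Fin n → (ball r m → A) => dStar r μ T (obsJoin T φ (ball r m)) σ ψ ≤ ε ∧
      (fun j => ψ j ⟨1, one_mem_ball r m⟩) = ω) with hsdef
  have hcardS : (Nat.card {ψ : Fin n → (ball r m → A) //
      dStar r μ T (obsJoin T φ (ball r m)) σ ψ ≤ ε ∧
      (fun j => ψ j ⟨1, one_mem_ball r m⟩) = ω}) = s.card := by
    rw [hsdef, Nat.card_eq_fintype_card, Fintype.card_subtype]
  have hfiber : s.card = ∑ D ∈ Finset.univ.filter (fun D : Finset (Fin n) => D.card ≤ t),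
      (s.filter (fun ψ => badF ψ = D)).card := by
    refine Finset.card_eq_sum_card_fiberwise fun ψ hψ => ?_
    simp only [hsdef, Finset.mem_coe, Finset.mem_filter, Finset.mem_univ, true_and] at hψ ⊢
    exact hbad ψ hψ.1
  have hfibbound : ∀ D ∈ Finset.univ.filter (fun D : Finset (Fin n) => D.card ≤ t),
      (s.filter (fun ψ => badF ψ = D)).card ≤ (M + 1) ^ t := by
    intro D hD
    simp only [Finset.mem_filter, Finset.mem_univ, true_and] at hD
    have hinj : (s.filter (fun ψ => badF ψ = D)).card
        ≤ (Finset.univ : Finset ({x // x ∈ D} → (ball r m → A))).card := by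
      refine Finset.card_le_card_of_injOn
        (fun ψ => fun x : {x // x ∈ D} => ψ x.1)
        (fun _ _ => Finset.mem_univ _) ?_
      intro ψ₁ h₁ ψ₂ h₂ hres
      simp only [hsdef, Finset.mem_coe, Finset.mem_filter, Finset.mem_univ, true_and] at h₁ h₂
      funext j
      by_cases hj : j ∈ D
      · exact congrFun hres ⟨j, hj⟩
      · have hg1 : CardFiberAux.GoodV σ ψ₁ j := by
          have := hj
          rw [← h₁.2] at this
          simp only [hbadF, Finset.mem_filter, Finset.mem_univ, true_and, not_not] at this
          exact this
        have hg2 : CardFiberAux.GoodV σ ψ₂ j := by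
          have := hj
          rw [← h₂.2] at this
          simp only [hbadF, Finset.mem_filter, Finset.mem_univ, true_and, not_not] at this
          exact this
        funext q
        rw [hrec ψ₁ h₁.1.2 j hg1 q, hrec ψ₂ h₂.1.2 j hg2 q]
    refine hinj.trans ?_
    rw [Finset.card_univ, Fintype.card_fun, Fintype.card_coe, ← hMdef]
    calc M ^ D.card ≤ (M + 1) ^ D.card := Nat.pow_le_pow_left (Nat.le_succ M) _
      _ ≤ (M + 1) ^ t := Nat.pow_le_pow_right (Nat.succ_pos M) hD
  have hcount : s.card ≤ (Finset.univ.filter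
      (fun D : Finset (Fin n) => D.card ≤ t)).card * (M + 1) ^ t := by
    rw [hfiber]
    calc ∑ D ∈ Finset.univ.filter (fun D : Finset (Fin n) => D.card ≤ t),
          (s.filter (fun ψ => badF ψ = D)).card
        ≤ ∑ _D ∈ Finset.univ.filter (fun D : Finset (Fin n) => D.card ≤ t), (M + 1) ^ t :=
          Finset.sum_le_sum hfibbound
      _ = _ := by rw [Finset.sum_const, smul_eq_mul]
  have hDcount : (Finset.univ.filter (fun D : Finset (Fin n) => D.card ≤ t)).card
      ≤ ∑ d ∈ Finset.range (t + 1), n.choose d := by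
    have hmap : ∀ D ∈ Finset.univ.filter (fun D : Finset (Fin n) => D.card ≤ t),
        D.card ∈ Finset.range (t + 1) := by
      intro D hD
      simp only [Finset.mem_filter, Finset.mem_univ, true_and] at hD
      exact Finset.mem_range.mpr (Nat.lt_succ_of_le hD)
    rw [Finset.card_eq_sum_card_fiberwise hmap]
    refine Finset.sum_le_sum fun d _ => ?_
    have hsub : (Finset.univ.filter (fun D : Finset (Fin n) => D.card ≤ t)).filter
        (fun D => D.card = d) ⊆ Finset.univ.filter (fun D : Finset (Fin n) => D.card = d) :=
      Finset.filter_subset_filter _ (Finset.subset_univ _)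
    have hcd : (Finset.univ.filter (fun D : Finset (Fin n) => D.card = d)).card
        = n.choose d := by
      rw [← Finset.powerset_univ, ← Finset.powersetCard_eq_filter,
        Finset.card_powersetCard, Finset.card_univ, Fintype.card_fin]
    calc ((Finset.univ.filter (fun D : Finset (Fin n) => D.card ≤ t)).filter
          (fun D => D.card = d)).card ≤ _ := Finset.card_le_card hsub
      _ = n.choose d := hcd
  -- assemble
  rw [hcardS]
  have hchoose := CardFiberAux.sum_choose_le_exp n t δ hδ0 hδhalf htle
  have hpow : ((M + 1 : ℕ) : ℝ) ^ t ≤ Real.exp (δ * n * Real.log (M + 1)) := by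
    have e2 : ((M + 1 : ℕ) : ℝ) ^ t = Real.exp (t * Real.log ((M + 1 : ℕ) : ℝ)) := by
      rw [← Real.log_pow, Real.exp_log (by positivity)]
    rw [e2]
    apply Real.exp_le_exp.2
    have : ((M + 1 : ℕ) : ℝ) = (M : ℝ) + 1 := by push_cast; ring
    rw [this]
    exact mul_le_mul_of_nonneg_right htle hlogM
  have hsR : (s.card : ℝ) ≤ (∑ d ∈ Finset.range (t + 1), (n.choose d : ℝ)) *
      ((M + 1 : ℕ) : ℝ) ^ t := by
    calc (s.card : ℝ) ≤ (((Finset.univ.filter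
          (fun D : Finset (Fin n) => D.card ≤ t)).card * (M + 1) ^ t : ℕ) : ℝ) := by
          exact_mod_cast hcount
      _ ≤ _ := by
          push_cast
          refine mul_le_mul_of_nonneg_right ?_ (by positivity)
          exact_mod_cast hDcount
  refine hsR.trans ?_
  have hfinal : (∑ d ∈ Finset.range (t + 1), (n.choose d : ℝ)) *
      ((M + 1 : ℕ) : ℝ) ^ t ≤ Real.exp (n * binEnt δ) * Real.exp (δ * n * Real.log (M + 1)) :=
    mul_le_mul hchoose hpow (by positivity) (Real.exp_nonneg _)
  refine hfinal.trans ?_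
  rw [one_mul, ← Real.exp_add]
  apply Real.exp_le_exp.2
  have hεn : 0 ≤ (n:ℝ) * ε := by positivity
  rw [hδdef]
  nlinarith [hεn]
end
end

section
/- Let G = ⟨s_1,…,s_r⟩ be the free group of rank r ≥ 1, let T be a measure-preserving action of G on a standard probability space (X,μ), let φ : X → A be an observable with A finite, and let B = B(e,m) for some m ≥ 0. Let σ : G → Sym(n) be a homomorphism and ψ : {1,…,n} → A^B a map, and set ω := π_e∘ψ. Then |{1 ≤ i ≤ n : ψ(i) ≠ (ω(σ(g)i))_{g∈B}}| ≤ n·|B|·d^*_σ(φ^B, ψ). -/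
open MeasureTheory Real Filter

noncomputable section

/-! ### Auxiliary material for `card_bad_le` -/

section Aux

/-- An infix of a reduced word is reduced. -/
lemma reduce_eq_self_of_infix {α : Type*} [DecidableEq α] {w L : List (α × Bool)}
    (h : w <:+: L) (hL : FreeGroup.reduce L = L) : FreeGroup.reduce w = w := by
  by_contra hw
  rcases Relation.ReflTransGen.cases_head (FreeGroup.reduce.red (L := w)) with heq | ⟨w', hstep, -⟩
  · exact hw heq.symm
  · cases hstep with
    | @not u1 u2 x b =>
      obtain ⟨u, v, huv⟩ := h
      exact FreeGroup.reduce.not (L₁ := L) (L₂ := u ++ u1) (L₃ := u2 ++ v) (x := x) (b := b)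
        (by rw [hL, ← huv]; simp)

lemma mk_mem_ball {r m : ℕ} {l : List (Fin r × Bool)} (hred : FreeGroup.reduce l = l)
    (hl : l.length ≤ m) : FreeGroup.mk l ∈ ball r m := by
  show (FreeGroup.mk l).toWord.length ≤ m
  rw [FreeGroup.toWord_mk, hred]; exact hl

/-- The set of indices `j` with an inconsistency across the edge labelled `s_k`. -/
def BadAt {r m n : ℕ} {A : Type*} (σ : FreeGroup (Fin r) →* Equiv.Perm (Fin n))
    (ψ : Fin n → (ball r m → A)) (k : Fin r) (j : Fin n) : Prop :=
  ∃ (g : FreeGroup (Fin r)) (hg : g ∈ ball r m) (hgk : g * FreeGroup.of k ∈ ball r m),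
    ψ (σ (FreeGroup.of k) j) ⟨g, hg⟩ ≠ ψ j ⟨g * FreeGroup.of k, hgk⟩

/-- Key induction: if no index along the path from `i` to `σ(g)i` is bad, then
`ψ i` and `ψ (σ g i)` are consistent at `g`. -/
lemma key_consistency {r m n : ℕ} {A : Type*} (σ : FreeGroup (Fin r) →* Equiv.Perm (Fin n))
    (ψ : Fin n → (ball r m → A)) :
    ∀ l : List (Fin r × Bool), FreeGroup.reduce l = l → ∀ i : Fin n,
      (∀ p : ℕ, ∀ k : Fin r, ¬ BadAt σ ψ k (σ (FreeGroup.mk (l.drop p)) i)) →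
      ∀ g, g = FreeGroup.mk l → ∀ (hg : g ∈ ball r m),
        ψ i ⟨g, hg⟩ = ψ (σ g i) ⟨1, one_mem_ball r m⟩ := by
  intro l
  induction l using List.reverseRecOn with
  | nil =>
    intro _ i _ g hgl hg
    subst hgl
    have h1 : FreeGroup.mk ([] : List (Fin r × Bool)) = (1 : FreeGroup (Fin r)) :=
      FreeGroup.one_eq_mk.symm
    rw [show (⟨FreeGroup.mk [], hg⟩ : (ball r m).Elem) = ⟨1, one_mem_ball r m⟩
        from Subtype.ext h1, h1, map_one, Equiv.Perm.one_apply]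
  | append_singleton w t ih =>
    intro hred i hyp g hgl hg
    subst hgl
    have hred' : FreeGroup.reduce w = w :=
      reduce_eq_self_of_infix (List.prefix_append w [t]).isInfix hred
    have hlen0 : (FreeGroup.mk (w ++ [t])).toWord.length ≤ m := hg
    rw [FreeGroup.toWord_mk, hred] at hlen0
    have hwlen : w.length ≤ m := by simp at hlen0; omega
    have hmkw : FreeGroup.mk w ∈ ball r m := mk_mem_ball hred' hwlen
    have hyp' : ∀ p k', ¬ BadAt σ ψ k' (σ (FreeGroup.mk (w.drop p)) (σ (FreeGroup.mk [t]) i)) := by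
      intro p k'
      by_cases hp : p ≤ w.length
      · have h0 := hyp p k'
        rw [List.drop_append_of_le_length hp, ← FreeGroup.mul_mk, map_mul,
          Equiv.Perm.mul_apply] at h0
        exact h0
      · have h0 := hyp w.length k'
        rw [List.drop_append_of_le_length le_rfl, List.drop_length, List.nil_append] at h0
        rw [List.drop_eq_nil_of_le (by omega), ← FreeGroup.one_eq_mk, map_one,
          Equiv.Perm.one_apply]
        exact h0
    have ihres := ih hred' (σ (FreeGroup.mk [t]) i) hyp' (FreeGroup.mk w) rfl hmkw
    have hfin : σ (FreeGroup.mk (w ++ [t])) i = σ (FreeGroup.mk w) (σ (FreeGroup.mk [t]) i) := by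
      rw [← FreeGroup.mul_mk, map_mul, Equiv.Perm.mul_apply]
    obtain ⟨k, b⟩ := t
    cases b with
    | true =>
      have ht : FreeGroup.mk [(k, true)] = FreeGroup.of k := rfl
      have hcons := hyp (w ++ [(k, true)]).length k
      rw [List.drop_length, ← FreeGroup.one_eq_mk, map_one, Equiv.Perm.one_apply] at hcons
      simp only [BadAt, not_exists] at hcons
      push_neg at hcons
      have hmem2 : FreeGroup.mk w * FreeGroup.of k ∈ ball r m := by
        rw [← ht, FreeGroup.mul_mk]; exact hg
      have e1 := hcons (FreeGroup.mk w) hmkw hmem2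
      have e2 : ψ i ⟨FreeGroup.mk (w ++ [(k, true)]), hg⟩
          = ψ i ⟨FreeGroup.mk w * FreeGroup.of k, hmem2⟩ :=
        congrArg (ψ i) (Subtype.ext (show FreeGroup.mk (w ++ [(k, true)])
          = FreeGroup.mk w * FreeGroup.of k by rw [← ht, FreeGroup.mul_mk]))
      rw [e2, ← e1, hfin]
      exact ihres
    | false =>
      have ht : FreeGroup.mk [(k, false)] = (FreeGroup.of k)⁻¹ := by
        rw [show (FreeGroup.of k : FreeGroup (Fin r)) = FreeGroup.mk [(k, true)] from rfl,
          FreeGroup.inv_mk]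
        simp [FreeGroup.invRev]
      have hcons := hyp w.length k
      rw [List.drop_append_of_le_length le_rfl, List.drop_length, List.nil_append] at hcons
      simp only [BadAt, not_exists] at hcons
      push_neg at hcons
      have hback : σ (FreeGroup.of k) (σ (FreeGroup.mk [(k, false)]) i) = i := by
        rw [ht, ← Equiv.Perm.mul_apply, ← map_mul, mul_inv_cancel, map_one, Equiv.Perm.one_apply]
      have hmuleq : FreeGroup.mk (w ++ [(k, false)]) * FreeGroup.of k = FreeGroup.mk w := by
        rw [← FreeGroup.mul_mk, ht, inv_mul_cancel_right]
      have hmem2 : FreeGroup.mk (w ++ [(k, false)]) * FreeGroup.of k ∈ ball r m := by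
        rw [hmuleq]; exact hmkw
      have e1 := hcons (FreeGroup.mk (w ++ [(k, false)])) hg hmem2
      rw [hback] at e1
      have e2 : ψ (σ (FreeGroup.mk [(k, false)]) i)
            ⟨FreeGroup.mk (w ++ [(k, false)]) * FreeGroup.of k, hmem2⟩
          = ψ (σ (FreeGroup.mk [(k, false)]) i) ⟨FreeGroup.mk w, hmkw⟩ :=
        congrArg _ (Subtype.ext hmuleq)
      rw [e1, e2, hfin]
      exact ihres

/-- If `ψ i` disagrees with the pulled-back labelling, some translate of `i` is bad. -/
lemma exists_bad {r m n : ℕ} {A : Type*} (σ : FreeGroup (Fin r) →* Equiv.Perm (Fin n))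
    (ψ : Fin n → (ball r m → A)) (i : Fin n)
    (hi : ψ i ≠ permJoin σ (fun j => ψ j ⟨1, one_mem_ball r m⟩) (ball r m) i) :
    ∃ u ∈ ball r m, ∃ k, BadAt σ ψ k (σ u i) := by
  by_contra hcon
  push_neg at hcon
  apply hi
  funext a
  obtain ⟨g, hg⟩ := a
  have hyp : ∀ p : ℕ, ∀ k : Fin r, ¬ BadAt σ ψ k (σ (FreeGroup.mk (g.toWord.drop p)) i) := by
    intro p k
    refine hcon (FreeGroup.mk (g.toWord.drop p)) ?_ k
    refine mk_mem_ball
      (reduce_eq_self_of_infix (List.drop_suffix p g.toWord).isInfix (FreeGroup.reduce_toWord g))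
      ?_
    have hgl : g.toWord.length ≤ m := hg
    rw [List.length_drop]; omega
  exact key_consistency σ ψ g.toWord (FreeGroup.reduce_toWord g) i hyp g
    FreeGroup.mk_toWord.symm hg

lemma ball_finite (r m : ℕ) : (ball r m).Finite := by
  have : ball r m = FreeGroup.toWord ⁻¹' {l | l.length ≤ m} := rfl
  rw [this]
  exact (List.finite_length_le _ m).preimage FreeGroup.toWord_injective.injOn

/-- The number of bad indices at an edge is at most `n` times the `dH` distance. -/
lemma card_badAt_le {r m n : ℕ} {X : Type*} [MeasurableSpace X] (μ : Measure X)
    (T : FreeGroup (Fin r) → X → X) (hTmul : ∀ g h x, T (g * h) x = T g (T h x))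
    {A : Type*} [Fintype A] (φ : X → A)
    (σ : FreeGroup (Fin r) →* Equiv.Perm (Fin n)) (ψ : Fin n → (ball r m → A)) (k : Fin r) :
    (Nat.card {j : Fin n // BadAt σ ψ k j} : ℝ) ≤
      n * dH μ T (obsJoin T φ (ball r m)) σ ψ {1, FreeGroup.of k} := by
  classical
  haveI := (ball_finite r m).to_subtype
  haveI : Finite ({1, FreeGroup.of k} : Set (FreeGroup (Fin r))) :=
    ((Set.finite_singleton (FreeGroup.of k)).insert 1).to_subtype
  haveI : Fintype (({1, FreeGroup.of k} : Set (FreeGroup (Fin r))) → (ball r m → A)) :=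
    Fintype.ofFinite _
  have mem1 : (1 : FreeGroup (Fin r)) ∈ ({1, FreeGroup.of k} : Set (FreeGroup (Fin r))) :=
    Set.mem_insert _ _
  have memk : FreeGroup.of k ∈ ({1, FreeGroup.of k} : Set (FreeGroup (Fin r))) :=
    Set.mem_insert_iff.mpr (Or.inr rfl)
  -- bad patterns
  set BadPat : (({1, FreeGroup.of k} : Set (FreeGroup (Fin r))) → (ball r m → A)) → Prop :=
    fun w => ∃ (g : FreeGroup (Fin r)) (hg : g ∈ ball r m)
      (hgk : g * FreeGroup.of k ∈ ball r m),
      w ⟨FreeGroup.of k, memk⟩ ⟨g, hg⟩ ≠ w ⟨1, mem1⟩ ⟨g * FreeGroup.of k, hgk⟩ with hBadPat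
  have badAt_iff : ∀ j : Fin n,
      BadAt σ ψ k j ↔ BadPat (permJoin σ ψ {1, FreeGroup.of k} j) := by
    intro j
    rw [hBadPat]
    constructor <;> rintro ⟨g, hg, hgk, hne⟩ <;> refine ⟨g, hg, hgk, ?_⟩ <;>
      simpa [permJoin, map_one] using hne
  -- preimages of bad patterns are empty
  have hzero : ∀ w, BadPat w →
      μ (obsJoin T (obsJoin T φ (ball r m)) {1, FreeGroup.of k} ⁻¹' {w}) = 0 := by
    intro w hw
    have : (obsJoin T (obsJoin T φ (ball r m)) {1, FreeGroup.of k} ⁻¹' {w}) = ∅ := by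
      ext x
      simp only [Set.mem_preimage, Set.mem_singleton_iff, Set.mem_empty_iff_false, iff_false]
      intro hx
      obtain ⟨g, hg, hgk, hne⟩ := hw
      apply hne
      rw [← hx]
      show φ (T g (T (FreeGroup.of k) x)) = φ (T (g * FreeGroup.of k) (T 1 x))
      rw [← hTmul, ← hTmul, mul_one]
    rw [this]; exact measure_empty
  -- counting
  have hcard_subtype : ∀ w, (Nat.card {j : Fin n // permJoin σ ψ {1, FreeGroup.of k} j = w})
      = (Finset.univ.filter fun j => permJoin σ ψ {1, FreeGroup.of k} j = w).card := by
    intro w; rw [Nat.card_eq_fintype_card, Fintype.card_subtype]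
  have hsum : (Nat.card {j : Fin n // BadAt σ ψ k j})
      = ∑ w ∈ Finset.univ.filter BadPat,
          Nat.card {j : Fin n // permJoin σ ψ {1, FreeGroup.of k} j = w} := by
    rw [Nat.card_eq_fintype_card, Fintype.card_subtype]
    have hfil : Finset.univ.filter (BadAt σ ψ k)
        = Finset.univ.filter (fun j => BadPat (permJoin σ ψ {1, FreeGroup.of k} j)) := by
      apply Finset.filter_congr; intro j _; exact badAt_iff j
    rw [hfil]
    refine (Finset.card_eq_sum_card_fiberwise
        (f := fun j => permJoin σ ψ {1, FreeGroup.of k} j)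
        (t := Finset.univ.filter BadPat) ?_).trans ?_
    · intro j hj
      simp only [Finset.mem_coe, Finset.mem_filter, Finset.mem_univ, true_and] at hj ⊢
      exact hj
    · refine Finset.sum_congr rfl fun w hw => ?_
      simp only [Finset.mem_filter, Finset.mem_univ, true_and] at hw
      rw [hcard_subtype w]
      congr 1
      ext j
      simp only [Finset.mem_filter, Finset.mem_univ, true_and]
      exact ⟨fun h => h.2, fun h => ⟨h ▸ hw, h⟩⟩
  -- rewrite dH as a finite sum
  have hdH : dH μ T (obsJoin T φ (ball r m)) σ ψ {1, FreeGroup.of k}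
      = ∑ w : (({1, FreeGroup.of k} : Set (FreeGroup (Fin r))) → (ball r m → A)),
          |(μ (obsJoin T (obsJoin T φ (ball r m)) {1, FreeGroup.of k} ⁻¹' {w})).toReal -
            (Nat.card {j : Fin n // permJoin σ ψ {1, FreeGroup.of k} j = w} : ℝ) / n| := by
    rw [dH, tsum_fintype]
  rcases Nat.eq_zero_or_pos n with hn | hn
  · subst hn
    haveI : IsEmpty {j : Fin 0 // BadAt σ ψ k j} := ⟨fun j => j.1.elim0⟩
    simp only [Nat.card_of_isEmpty, Nat.cast_zero, Nat.cast_ofNat, CharP.cast_eq_zero, zero_mul]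
    exact le_refl 0
  have hn0 : (n : ℝ) ≠ 0 := by positivity
  have hterm : ∀ w ∈ Finset.univ.filter BadPat,
      (Nat.card {j : Fin n // permJoin σ ψ {1, FreeGroup.of k} j = w} : ℝ) / n ≤
        |(μ (obsJoin T (obsJoin T φ (ball r m)) {1, FreeGroup.of k} ⁻¹' {w})).toReal -
          (Nat.card {j : Fin n // permJoin σ ψ {1, FreeGroup.of k} j = w} : ℝ) / n| := by
    intro w hw
    simp only [Finset.mem_filter, Finset.mem_univ, true_and] at hw
    rw [hzero w hw, ENNReal.toReal_zero, zero_sub, abs_neg]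
    exact le_abs_self _
  have hge : ∑ w ∈ Finset.univ.filter BadPat,
      ((Nat.card {j : Fin n // permJoin σ ψ {1, FreeGroup.of k} j = w} : ℝ) / n) ≤
        dH μ T (obsJoin T φ (ball r m)) σ ψ {1, FreeGroup.of k} := by
    rw [hdH]
    refine le_trans (Finset.sum_le_sum hterm) ?_
    exact Finset.sum_le_sum_of_subset_of_nonneg (Finset.filter_subset _ _)
      (fun w _ _ => abs_nonneg _)
  calc (Nat.card {j : Fin n // BadAt σ ψ k j} : ℝ)
      = ∑ w ∈ Finset.univ.filter BadPat,
          (Nat.card {j : Fin n // permJoin σ ψ {1, FreeGroup.of k} j = w} : ℝ) := by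
        rw [hsum]; push_cast; ring
    _ = n * ∑ w ∈ Finset.univ.filter BadPat,
          ((Nat.card {j : Fin n // permJoin σ ψ {1, FreeGroup.of k} j = w} : ℝ) / n) := by
        rw [Finset.mul_sum]
        refine Finset.sum_congr rfl fun w _ => ?_
        rw [mul_comm, div_mul_cancel₀ _ hn0]
    _ ≤ n * dH μ T (obsJoin T φ (ball r m)) σ ψ {1, FreeGroup.of k} :=
        mul_le_mul_of_nonneg_left hge (by positivity)

end Aux

/-- Let `B = B(e,m)`, let `σ : G →* Sym(n)` be a homomorphism, `ψ : {1,…,n} → A^B` a map and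
`ω = π_e ∘ ψ`. Then the number of `i` with `ψ(i) ≠ (ω(σ(g)i))_{g ∈ B}` is at most
`n|B| d^*_σ(φ^B,ψ)`. -/
theorem card_bad_le {r : ℕ} (hr : 1 ≤ r)
    {X : Type*} [MeasurableSpace X] [StandardBorelSpace X]
    (μ : Measure X) [IsProbabilityMeasure μ]
    (T : FreeGroup (Fin r) → X → X)
    (hT : ∀ g, MeasurePreserving (T g) μ μ)
    (hTmul : ∀ g h x, T (g * h) x = T g (T h x))
    {A : Type*} [Fintype A] [MeasurableSpace A] [MeasurableSingletonClass A]
    (φ : X → A) (hφ : Measurable φ) (m : ℕ) {n : ℕ}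
    (σ : FreeGroup (Fin r) →* Equiv.Perm (Fin n))
    (ψ : Fin n → (ball r m → A)) :
    (Nat.card {i : Fin n //
        ψ i ≠ permJoin σ (fun j => ψ j ⟨1, one_mem_ball r m⟩) (ball r m) i} : ℝ) ≤
      n * ((ball r m).ncard : ℝ) * dStar r μ T (obsJoin T φ (ball r m)) σ ψ := by
  classical
  have hBfin : (ball r m).Finite := ball_finite r m
  set P : Fin n → Prop := fun i =>
    ψ i ≠ permJoin σ (fun j => ψ j ⟨1, one_mem_ball r m⟩) (ball r m) i with hP
  have hS : (Nat.card {i : Fin n // P i}) = (Finset.univ.filter P).card := by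
    rw [Nat.card_eq_fintype_card, Fintype.card_subtype]
  have hsub : Finset.univ.filter P ⊆ hBfin.toFinset.biUnion (fun u =>
      Finset.univ.biUnion (fun k : Fin r =>
        Finset.univ.filter (fun i => BadAt σ ψ k (σ u i)))) := by
    intro i hi
    simp only [hP, Finset.mem_filter, Finset.mem_univ, true_and] at hi
    obtain ⟨u, hu, k, hk⟩ := exists_bad σ ψ i hi
    simp only [Finset.mem_biUnion, Finset.mem_filter, Finset.mem_univ, true_and]
    exact ⟨u, hBfin.mem_toFinset.mpr hu, k, hk⟩
  have hcard1 : (Finset.univ.filter P).card ≤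
      ∑ u ∈ hBfin.toFinset, ∑ k : Fin r,
        (Finset.univ.filter (fun i => BadAt σ ψ k (σ u i))).card :=
    le_trans (Finset.card_le_card hsub) (le_trans Finset.card_biUnion_le
      (Finset.sum_le_sum fun u _ => Finset.card_biUnion_le))
  have hfiber : ∀ (u : FreeGroup (Fin r)) (k : Fin r),
      (Finset.univ.filter (fun i => BadAt σ ψ k (σ u i))).card
        = Nat.card {j : Fin n // BadAt σ ψ k j} := by
    intro u k
    calc (Finset.univ.filter (fun i => BadAt σ ψ k (σ u i))).card
        = Fintype.card {i : Fin n // BadAt σ ψ k (σ u i)} := (Fintype.card_subtype _).symm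
      _ = Fintype.card {j : Fin n // BadAt σ ψ k j} :=
          Fintype.card_congr ((σ u).subtypeEquiv fun i => Iff.rfl)
      _ = Nat.card {j : Fin n // BadAt σ ψ k j} := Nat.card_eq_fintype_card.symm
  simp only [hfiber] at hcard1
  have hkey : ∀ k : Fin r, (Nat.card {j : Fin n // BadAt σ ψ k j} : ℝ) ≤
      n * dH μ T (obsJoin T φ (ball r m)) σ ψ {1, FreeGroup.of k} :=
    fun k => card_badAt_le μ T hTmul φ σ ψ k
  have hdStar : dStar r μ T (obsJoin T φ (ball r m)) σ ψ
      = ∑ k : Fin r, dH μ T (obsJoin T φ (ball r m)) σ ψ {1, FreeGroup.of k} := rfl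
  have hncard : ((ball r m).ncard : ℝ) = (hBfin.toFinset.card : ℝ) := by
    rw [Set.ncard_eq_toFinset_card _ hBfin]
  calc (Nat.card {i : Fin n // P i} : ℝ)
      ≤ ∑ u ∈ hBfin.toFinset, ∑ k : Fin r,
          (Nat.card {j : Fin n // BadAt σ ψ k j} : ℝ) := by
        rw [hS]; exact_mod_cast hcard1
    _ ≤ ∑ u ∈ hBfin.toFinset, ∑ k : Fin r,
          (n * dH μ T (obsJoin T φ (ball r m)) σ ψ {1, FreeGroup.of k}) :=
        Finset.sum_le_sum fun u _ => Finset.sum_le_sum fun k _ => hkey k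
    _ = (hBfin.toFinset.card : ℝ) * ∑ k : Fin r,
          (n * dH μ T (obsJoin T φ (ball r m)) σ ψ {1, FreeGroup.of k}) := by
        rw [Finset.sum_const, nsmul_eq_mul]
    _ = n * ((ball r m).ncard : ℝ) * dStar r μ T (obsJoin T φ (ball r m)) σ ψ := by
        rw [hncard, hdStar, Finset.mul_sum, Finset.mul_sum]
        exact Finset.sum_congr rfl fun k _ => by ring
end
end
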